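/- arXiv:1811.07821 — 2 statements merged into one kernel-verified Lean document; each statement's English description precedes it below -/
import Mathlib

section
/- In the correlated Erdős–Rényi model, assume n ≥ 2, m·qs ≥ 96·log n, and s ≥ 12q. Then with probability at least 1 − 2·n^{−m} the following holds simultaneously: for every subset S ⊆ [n] with |S| = m and π0 = π*|_S, with n_{ik} = Σ_{j∈S} A_{ij}B_{k,π0(j)} and H_{ik} = 1{n_{ik} ≥ m·qs/2} for i∈S^c, k∈(π*(S))^c, every perfect matching π̃1 between S^c and (π*(S))^c that maximizes Σ_{i∈S^c} H_{i,π̃1(i)} yields a permutation π1 of [n] (extending π0 by π̃1) satisfying |{i ∈ [n] : π1(i) ≠ π*(i)}| ≤ 192·(log n)/(qs). -/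
open MeasureTheory ProbabilityTheory Finset
open scoped ENNReal Classical

noncomputable section

namespace GraphMatching

/-- Joint law of the pair `(A_{ij}, B_{π*(i)π*(j)})` of edge indicators (for `i<j`) in the
correlated Erdős–Rényi model `G(n,q,s)`: `P(1,1) = qs`, `P(1,0) = P(0,1) = q(1−s)`,
`P(0,0) = 1 − 2q + qs`.  (This encodes `A_{ij} ~ Bern(q)` and, conditionally on `A`,
`B ~ Bern(s)` on edges of `A` and `B ~ Bern(q(1−s)/(1−q))` on non-edges.) -/
def erPairLaw (q s : ℝ) : Measure (Bool × Bool) :=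
  ENNReal.ofReal (q * s) • Measure.dirac (true, true)
    + ENNReal.ofReal (q * (1 - s)) • Measure.dirac (true, false)
    + ENNReal.ofReal (q * (1 - s)) • Measure.dirac (false, true)
    + ENNReal.ofReal (1 - 2 * q + q * s) • Measure.dirac (false, false)

/-- The correlated Erdős–Rényi model `G(n,q,s)` with latent permutation `π`:
`A`, `B` are symmetric 0–1 matrices with zero diagonal and the pairs
`(A_{ij}, B_{π(i)π(j)})`, `i < j`, are i.i.d. with law `erPairLaw q s`. -/
structure IsCorrER {Ω : Type*} [MeasurableSpace Ω] (P : Measure Ω)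
    (n : ℕ) (q s : ℝ) (A B : Ω → Fin n → Fin n → Bool) (π : Equiv.Perm (Fin n)) : Prop where
  symmA : ∀ ω i j, A ω i j = A ω j i
  symmB : ∀ ω i j, B ω i j = B ω j i
  diagA : ∀ ω i, A ω i i = false
  diagB : ∀ ω i, B ω i i = false
  meas : ∀ i j : Fin n, Measurable fun ω => (A ω i j, B ω (π i) (π j))
  indep : iIndepFun
    (fun (p : {p : Fin n × Fin n // p.1 < p.2}) ω =>
      (A ω p.1.1 p.1.2, B ω (π p.1.1) (π p.1.2))) P
  law : ∀ i j : Fin n, i < j →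
    P.map (fun ω => (A ω i j, B ω (π i) (π j))) = erPairLaw q s

variable {n : ℕ}

/-- Open neighborhood `N_A(i)`. -/
def nbr (A : Fin n → Fin n → Bool) (i : Fin n) : Finset (Fin n) :=
  univ.filter fun j => A i j = true

/-- Degree `a_i`. -/
def deg (A : Fin n → Fin n → Bool) (i : Fin n) : ℕ := (nbr A i).card

/-- Closed neighborhood `N_A[i]`. -/
def cnbr (A : Fin n → Fin n → Bool) (i : Fin n) : Finset (Fin n) := insert i (nbr A i)

/-- Standardized outdegree `a_j^{(i)} = (Σ_{ℓ∉N_A[i]}(A_{ℓj}−q))/√((n−a_i−1)q(1−q))`. -/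
def outdeg (q : ℝ) (A : Fin n → Fin n → Bool) (i j : Fin n) : ℝ :=
  (∑ ℓ ∈ (cnbr A i)ᶜ, ((if A ℓ j = true then (1 : ℝ) else 0) - q)) /
    Real.sqrt (((n : ℝ) - deg A i - 1) * q * (1 - q))

/-- `Binomc(k,q)(I)`: probability that the standardized binomial `(X−kq)/√(kq(1−q))`,
`X ~ Binom(k,q)`, lies in `I`. -/
def binomcProb (k : ℕ) (q : ℝ) (I : Set ℝ) : ℝ :=
  ∑ x ∈ Finset.range (k + 1),
    (k.choose x : ℝ) * q ^ x * (1 - q) ^ (k - x) *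
      (if ((x : ℝ) - k * q) / Real.sqrt (k * q * (1 - q)) ∈ I then 1 else 0)

/-- Centered degree profile `μ̄_i(I)` (a finite signed measure, evaluated at `I`). -/
def profile (q : ℝ) (A : Fin n → Fin n → Bool) (i : Fin n) (I : Set ℝ) : ℝ :=
  (((nbr A i).filter fun j => outdeg q A i j ∈ I).card : ℝ) / (deg A i : ℝ)
    - binomcProb (n - deg A i - 1) q I

/-- The `ℓ`-th interval of the uniform partition of `[-1/2,1/2]` into `L` pieces. -/
def bin (L ℓ : ℕ) : Set ℝ :=
  Set.Ico (-(1 / 2) + (ℓ : ℝ) / L) (-(1 / 2) + ((ℓ : ℝ) + 1) / L)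

/-- The degree-profile distance statistic `Z_{ik} = Σ_{ℓ∈[L]} |μ̄_i(I_ℓ) − ν̄_k(I_ℓ)|`. -/
def Zstat (q : ℝ) (L : ℕ) (A B : Fin n → Fin n → Bool) (i k : Fin n) : ℝ :=
  ∑ ℓ ∈ Finset.range L, |profile q A i (bin L ℓ) - profile q B k (bin L ℓ)|

/-- Binomial upper tail `P(Binom(m,q) ≥ k)`. -/
def binomTail (m : ℕ) (q : ℝ) (k : ℕ) : ℝ :=
  ∑ x ∈ Finset.Icc k m, (m.choose x : ℝ) * q ^ x * (1 - q) ^ (m - x)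

/-- Seed similarity count `n_{ik} = Σ_{j∈S} A_{ij} B_{k,π0(j)}`, with seeds `π0 = π|_S`. -/
def seedCount (A B : Fin n → Fin n → Bool) (π : Equiv.Perm (Fin n)) (S : Finset (Fin n))
    (i k : Fin n) : ℕ :=
  (S.filter fun j => A i j = true ∧ B k (π j) = true).card

/-- The weight `w(π̃1) = Σ_{i∈Sᶜ} H_{i,π̃1(i)}`, `H_{ik} = 1{n_{ik} ≥ κ}`, of the bipartite
matching induced on `Sᶜ × (π S)ᶜ` by a permutation `π1` of `[n]` extending the seeds. -/
def matchWeight (A B : Fin n → Fin n → Bool) (π : Equiv.Perm (Fin n)) (S : Finset (Fin n))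
    (κ : ℝ) (π1 : Equiv.Perm (Fin n)) : ℕ :=
  (Sᶜ.filter fun i => κ ≤ (seedCount A B π S i (π1 i) : ℝ)).card

/-- Final similarity `w_{ik} = Σ_{j∈[n]} A_{ij} B_{k,π1(j)}`. -/
def wSim (A B : Fin n → Fin n → Bool) (π1 : Equiv.Perm (Fin n)) (i k : Fin n) : ℕ :=
  (univ.filter fun j => A i j = true ∧ B k (π1 j) = true).card

section Aux

variable {n : ℕ}

/-- sorted pair -/
def sp (x : Fin n × Fin n) : Fin n × Fin n := if x.1 < x.2 then x else (x.2, x.1)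

lemma sp_lt {x : Fin n × Fin n} (h : x.1 ≠ x.2) : (sp x).1 < (sp x).2 := by
  unfold sp; split_ifs with h'
  · exact h'
  · exact lt_of_le_of_ne (not_lt.mp h') (fun e => h e.symm)

lemma sp_eq_of {S : Finset (Fin n)} {x y : Fin n × Fin n}
    (hx1 : x.1 ∉ S) (hx2 : x.2 ∈ S) (hy1 : y.1 ∉ S) (hy2 : y.2 ∈ S)
    (h : sp x = sp y) : x = y := by
  unfold sp at h
  split_ifs at h with h1 h2 h2
  · exact h
  · exact absurd ((congrArg Prod.fst h).symm ▸ hy2) hx1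
  · exact absurd ((congrArg Prod.fst h) ▸ hx2) hy1
  · exact Prod.ext (congrArg Prod.snd h) (congrArg Prod.fst h)

/-- the finset of sorted pairs corresponding to a finset of (distinct-component) pairs -/
def pairsOf (V : Finset (Fin n × Fin n)) : Finset {p : Fin n × Fin n // p.1 < p.2} :=
  (V.image sp).subtype fun x => x.1 < x.2

lemma prod_pairsOf {M : Type*} [CommMonoid M] {V : Finset (Fin n × Fin n)}
    (hne : ∀ x ∈ V, x.1 ≠ x.2) (hinj : ∀ x ∈ V, ∀ y ∈ V, sp x = sp y → x = y)
    (f : Fin n × Fin n → M) :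
    ∏ p ∈ pairsOf V, f p.val = ∏ x ∈ V, f (sp x) := by
  rw [pairsOf, Finset.prod_subtype_eq_prod_filter]
  rw [Finset.filter_true_of_mem]
  · exact Finset.prod_image hinj
  · intro x hx
    obtain ⟨v, hv, rfl⟩ := Finset.mem_image.mp hx
    exact sp_lt (hne v hv)

lemma sum_pairsOf {M : Type*} [AddCommMonoid M] {V : Finset (Fin n × Fin n)}
    (hne : ∀ x ∈ V, x.1 ≠ x.2) (hinj : ∀ x ∈ V, ∀ y ∈ V, sp x = sp y → x = y)
    (f : Fin n × Fin n → M) :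
    ∑ p ∈ pairsOf V, f p.val = ∑ x ∈ V, f (sp x) := by
  rw [pairsOf, Finset.sum_subtype_eq_sum_filter]
  rw [Finset.filter_true_of_mem]
  · exact Finset.sum_image hinj
  · intro x hx
    obtain ⟨v, hv, rfl⟩ := Finset.mem_image.mp hx
    exact sp_lt (hne v hv)

lemma card_pairsOf {V : Finset (Fin n × Fin n)}
    (hne : ∀ x ∈ V, x.1 ≠ x.2) (hinj : ∀ x ∈ V, ∀ y ∈ V, sp x = sp y → x = y) :
    (pairsOf V).card = V.card := by
  have := sum_pairsOf (M := ℕ) hne hinj (fun _ => 1)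
  simpa using this

lemma measBB (s : Set (Bool × Bool)) : MeasurableSet s := s.toFinite.measurableSet

variable {q s : ℝ} {Ω : Type*} [MeasurableSpace Ω] {P : Measure Ω}
  {A B : Ω → Fin n → Fin n → Bool} {π : Equiv.Perm (Fin n)}

/-- plain-pair version of the coordinate variables -/
def XPv (A B : Ω → Fin n → Fin n → Bool) (π : Equiv.Perm (Fin n))
    (x : Fin n × Fin n) (ω : Ω) : Bool × Bool :=
  (A ω x.1 x.2, B ω (π x.1) (π x.2))

lemma erPairLaw_apply (q s : ℝ) (C : Set (Bool × Bool)) :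
    erPairLaw q s C = (if (true, true) ∈ C then ENNReal.ofReal (q * s) else 0)
      + (if (true, false) ∈ C then ENNReal.ofReal (q * (1 - s)) else 0)
      + (if (false, true) ∈ C then ENNReal.ofReal (q * (1 - s)) else 0)
      + (if (false, false) ∈ C then ENNReal.ofReal (1 - 2 * q + q * s) else 0) := by
  simp [erPairLaw, Measure.add_apply, Measure.smul_apply, Measure.dirac_apply' _ (measBB C),
    Set.indicator_apply, smul_eq_mul, mul_ite, mul_one, mul_zero]

lemma map_XPv (hM : IsCorrER P n q s A B π) {x : Fin n × Fin n} (hx : x.1 < x.2) :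
    P.map (XPv A B π x) = erPairLaw q s := hM.law x.1 x.2 hx

lemma prob_X (hM : IsCorrER P n q s A B π) {x : Fin n × Fin n} (hx : x.1 < x.2)
    (C : Set (Bool × Bool)) :
    P (XPv A B π x ⁻¹' C) = erPairLaw q s C := by
  rw [← map_XPv hM hx]
  exact ((Measure.map_apply (μ := P) (f := XPv A B π x) (hM.meas x.1 x.2) (measBB C))).symm

lemma prob_tt (hM : IsCorrER P n q s A B π) {x : Fin n × Fin n} (hx : x.1 < x.2) :
    P (XPv A B π x ⁻¹' {(true, true)}) = ENNReal.ofReal (q * s) := by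
  rw [prob_X hM hx, erPairLaw_apply]; simp

lemma prob_A (hM : IsCorrER P n q s A B π) {x : Fin n × Fin n} (hx : x.1 < x.2)
    (h1 : 0 ≤ q * s) (h2 : 0 ≤ q * (1 - s)) :
    P (XPv A B π x ⁻¹' {z | z.1 = true}) = ENNReal.ofReal q := by
  rw [prob_X hM hx, erPairLaw_apply]
  simp only [Set.mem_setOf_eq, if_true, if_false, add_zero]
  norm_num
  rw [← ENNReal.ofReal_add h1 h2]
  ring_nf

lemma prob_B (hM : IsCorrER P n q s A B π) {x : Fin n × Fin n} (hx : x.1 < x.2)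
    (h1 : 0 ≤ q * s) (h2 : 0 ≤ q * (1 - s)) :
    P (XPv A B π x ⁻¹' {z | z.2 = true}) = ENNReal.ofReal q := by
  rw [prob_X hM hx, erPairLaw_apply]
  simp only [Set.mem_setOf_eq, if_true, if_false, add_zero]
  norm_num
  rw [← ENNReal.ofReal_add h1 h2]
  ring_nf

lemma params (hM : IsCorrER P n q s A B π) [IsProbabilityMeasure P] (m : ℕ) (hn : 2 ≤ n)
    (hm : 96 * Real.log n ≤ m * (q * s)) :
    0 < q ∧ 0 < s ∧ s ≤ 1 ∧ q * s ≤ 1 ∧ 1 ≤ m := by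
  have hn1 : (1 : ℝ) < n := by exact_mod_cast hn.trans_lt' one_lt_two
  have hL : 0 < Real.log n := Real.log_pos hn1
  have hqs : 0 < q * s := by
    by_contra h; push_neg at h
    have : (m : ℝ) * (q * s) ≤ 0 := mul_nonpos_of_nonneg_of_nonpos (Nat.cast_nonneg m) h
    linarith
  have hm1 : 1 ≤ m := by
    rcases Nat.eq_zero_or_pos m with h | h
    · subst h; simp at hm; linarith
    · exact h
  have i0 : Fin n := ⟨0, by omega⟩
  have j0 : Fin n := ⟨1, by omega⟩
  have hij : (⟨0, by omega⟩ : Fin n) < (⟨1, by omega⟩ : Fin n) := by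
    simp [Fin.lt_def]
  have huniv : erPairLaw q s Set.univ = 1 := by
    have hmap : IsProbabilityMeasure (P.map (XPv A B π (⟨0, by omega⟩, ⟨1, by omega⟩))) :=
      Measure.isProbabilityMeasure_map (hM.meas _ _).aemeasurable
    rw [← map_XPv hM (x := (⟨0, by omega⟩, ⟨1, by omega⟩)) hij]
    exact hmap.measure_univ
  have hsum : ENNReal.ofReal (q * s) + ENNReal.ofReal (q * (1 - s))
      + ENNReal.ofReal (q * (1 - s)) + ENNReal.ofReal (1 - 2 * q + q * s) = 1 := by
    rw [← huniv, erPairLaw_apply]; simp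
  have hsing : ENNReal.ofReal (q * s) ≤ 1 :=
    le_of_le_of_eq (le_add_right (le_add_right (le_add_right (le_refl _)))) hsum
  have hq : 0 < q := by
    by_contra hq'; push_neg at hq'
    have hqne : q ≠ 0 := by rintro rfl; simp at hqs
    have hqlt : q < 0 := lt_of_le_of_ne hq' hqne
    have hsneg : s < 0 := by nlinarith
    have h4 : 1 < 1 - 2 * q + q * s := by nlinarith
    have hlt : (1 : ℝ≥0∞) < ENNReal.ofReal (1 - 2 * q + q * s) := by
      rw [← ENNReal.ofReal_one]
      exact (ENNReal.ofReal_lt_ofReal_iff (by linarith)).mpr h4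
    have hge : ENNReal.ofReal (1 - 2 * q + q * s) ≤ 1 := le_of_le_of_eq le_add_self hsum
    exact absurd (hlt.trans_le hge) (lt_irrefl _)
  have hs : 0 < s := by
    rcases mul_pos_iff.mp hqs with ⟨_, h⟩ | ⟨h, _⟩
    · exact h
    · linarith
  have hs1 : s ≤ 1 := by
    by_contra h1s; push_neg at h1s
    have hz : ENNReal.ofReal (q * (1 - s)) = 0 :=
      ENNReal.ofReal_eq_zero.mpr (mul_nonpos_of_nonneg_of_nonpos hq.le (by linarith))
    rw [hz, add_zero, add_zero] at hsum
    rcases le_or_gt (1 - 2 * q + q * s) 0 with hc | hc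
    · rw [ENNReal.ofReal_eq_zero.mpr hc, add_zero] at hsum
      have : q * s = 1 := by
        rwa [← ENNReal.ofReal_one, ENNReal.ofReal_eq_ofReal_iff hqs.le (by norm_num)] at hsum
      nlinarith
    · rw [← ENNReal.ofReal_add hqs.le hc.le] at hsum
      have : q * s + (1 - 2 * q + q * s) = 1 := by
        rwa [← ENNReal.ofReal_one, ENNReal.ofReal_eq_ofReal_iff (by linarith) (by norm_num)]
          at hsum
      nlinarith
  exact ⟨hq, hs, hs1, ENNReal.ofReal_le_one.mp hsing, hm1⟩

lemma prob_inter (hM : IsCorrER P n q s A B π) (T : Finset {p : Fin n × Fin n // p.1 < p.2})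
    (C : {p : Fin n × Fin n // p.1 < p.2} → Set (Bool × Bool)) :
    P (⋂ p ∈ T, XPv A B π p.val ⁻¹' C p) = ∏ p ∈ T, P (XPv A B π p.val ⁻¹' C p) :=
  hM.indep.measure_inter_preimage_eq_mul T (fun p _ => measBB (C p))

lemma prob_demands (hM : IsCorrER P n q s A B π)
    (h1 : 0 ≤ q * s) (h2 : 0 ≤ q * (1 - s))
    (S : Finset (Fin n)) (VA VB : Finset (Fin n × Fin n))
    (hVA : ∀ x ∈ VA, x.1 ∉ S ∧ x.2 ∈ S) (hVB : ∀ x ∈ VB, x.1 ∉ S ∧ x.2 ∈ S)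
    (hAB : ∀ x ∈ VA, ∀ y ∈ VB, x ≠ y) :
    P {ω | (∀ x ∈ VA, A ω x.1 x.2 = true) ∧ (∀ y ∈ VB, B ω (π y.1) (π y.2) = true)}
      ≤ ENNReal.ofReal q ^ (VA.card + VB.card) := by
  classical
  have hneA : ∀ x ∈ VA, x.1 ≠ x.2 := fun x hx e => (hVA x hx).1 (e ▸ (hVA x hx).2)
  have hneB : ∀ x ∈ VB, x.1 ≠ x.2 := fun x hx e => (hVB x hx).1 (e ▸ (hVB x hx).2)
  have hinjA : ∀ x ∈ VA, ∀ y ∈ VA, sp x = sp y → x = y := fun x hx y hy =>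
    sp_eq_of (hVA x hx).1 (hVA x hx).2 (hVA y hy).1 (hVA y hy).2
  have hinjB : ∀ x ∈ VB, ∀ y ∈ VB, sp x = sp y → x = y := fun x hx y hy =>
    sp_eq_of (hVB x hx).1 (hVB x hx).2 (hVB y hy).1 (hVB y hy).2
  set TA := pairsOf VA with hTA
  set TB := pairsOf VB with hTB
  have hdisj : Disjoint TA TB := by
    rw [Finset.disjoint_left]
    intro p hpA hpB
    rw [hTA, pairsOf, Finset.mem_subtype] at hpA
    rw [hTB, pairsOf, Finset.mem_subtype] at hpB
    obtain ⟨x, hx, hxe⟩ := Finset.mem_image.mp hpA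
    obtain ⟨y, hy, hye⟩ := Finset.mem_image.mp hpB
    exact hAB x hx y hy
      (sp_eq_of (hVA x hx).1 (hVA x hx).2 (hVB y hy).1 (hVB y hy).2 (hxe.trans hye.symm))
  set C : {p : Fin n × Fin n // p.1 < p.2} → Set (Bool × Bool) :=
    fun p => {z | (p ∈ TA → z.1 = true) ∧ (p ∈ TB → z.2 = true)} with hC
  have hsub : {ω | (∀ x ∈ VA, A ω x.1 x.2 = true) ∧ (∀ y ∈ VB, B ω (π y.1) (π y.2) = true)}
      ⊆ ⋂ p ∈ TA ∪ TB, XPv A B π p.val ⁻¹' C p := by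
    intro ω hω
    simp only [Set.mem_iInter]
    intro p _
    refine ⟨fun hpA => ?_, fun hpB => ?_⟩
    · rw [hTA, pairsOf, Finset.mem_subtype] at hpA
      obtain ⟨x, hx, hxe⟩ := Finset.mem_image.mp hpA
      show (XPv A B π p.val ω).1 = true
      rw [← hxe]
      show A ω (sp x).1 (sp x).2 = true
      unfold sp; split_ifs with hlt
      · exact hω.1 x hx
      · rw [hM.symmA]; exact hω.1 x hx
    · rw [hTB, pairsOf, Finset.mem_subtype] at hpB
      obtain ⟨y, hy, hye⟩ := Finset.mem_image.mp hpB
      show (XPv A B π p.val ω).2 = true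
      rw [← hye]
      show B ω (π (sp y).1) (π (sp y).2) = true
      unfold sp; split_ifs with hlt
      · exact hω.2 y hy
      · rw [hM.symmB]; exact hω.2 y hy
  have hA_factor : ∀ p ∈ TA, P (XPv A B π p.val ⁻¹' C p) = ENNReal.ofReal q := by
    intro p hp
    have hp' : p ∉ TB := Finset.disjoint_left.mp hdisj hp
    have : C p = {z | z.1 = true} := by
      ext z; simp [hC, hp, hp']
    rw [this]
    exact prob_A hM p.2 h1 h2
  have hB_factor : ∀ p ∈ TB, P (XPv A B π p.val ⁻¹' C p) = ENNReal.ofReal q := by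
    intro p hp
    have hp' : p ∉ TA := Finset.disjoint_right.mp hdisj hp
    have : C p = {z | z.2 = true} := by
      ext z; simp [hC, hp, hp']
    rw [this]
    exact prob_B hM p.2 h1 h2
  calc P {ω | (∀ x ∈ VA, A ω x.1 x.2 = true) ∧ (∀ y ∈ VB, B ω (π y.1) (π y.2) = true)}
      ≤ P (⋂ p ∈ TA ∪ TB, XPv A B π p.val ⁻¹' C p) := measure_mono hsub
    _ = ∏ p ∈ TA ∪ TB, P (XPv A B π p.val ⁻¹' C p) := prob_inter hM _ _
    _ = (∏ p ∈ TA, P (XPv A B π p.val ⁻¹' C p))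
        * ∏ p ∈ TB, P (XPv A B π p.val ⁻¹' C p) := Finset.prod_union hdisj
    _ = ENNReal.ofReal q ^ VA.card * ENNReal.ofReal q ^ VB.card := by
        rw [Finset.prod_congr rfl hA_factor, Finset.prod_congr rfl hB_factor,
          Finset.prod_const, Finset.prod_const, card_pairsOf hneA hinjA, card_pairsOf hneB hinjB]
    _ = ENNReal.ofReal q ^ (VA.card + VB.card) := (pow_add _ _ _).symm

def gind : Bool × Bool → ℝ := fun z => if z = (true, true) then 1 else 0

lemma gind_meas : Measurable gind :=
  Measurable.ite (measBB {z : Bool × Bool | z = (true, true)}) measurable_const measurable_const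

lemma gind_nonneg (z : Bool × Bool) : 0 ≤ gind z := by
  unfold gind; split_ifs <;> norm_num

lemma chernoff (hM : IsCorrER P n q s A B π) [IsProbabilityMeasure P]
    (hqs0 : 0 ≤ q * s)
    (T : Finset {p : Fin n × Fin n // p.1 < p.2}) (ε : ℝ) :
    P {ω | ∑ p ∈ T, gind (XPv A B π p.val ω) ≤ ε}
      ≤ ENNReal.ofReal (Real.exp (Real.log 2 * ε) * (1 - q * s / 2) ^ T.card) := by
  classical
  set t : ℝ := -Real.log 2 with ht_def
  have ht : t ≤ 0 := neg_nonpos.mpr (Real.log_nonneg one_le_two)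
  have hYindep : iIndepFun
      (fun (p : {p : Fin n × Fin n // p.1 < p.2}) ω => gind (XPv A B π p.val ω)) P :=
    hM.indep.comp (fun _ => gind) (fun _ => gind_meas)
  have hYmeas : ∀ p : {p : Fin n × Fin n // p.1 < p.2},
      Measurable (fun ω => gind (XPv A B π p.val ω)) :=
    fun p => gind_meas.comp (hM.meas p.val.1 p.val.2)
  have hXmeas : Measurable (fun ω => ∑ p ∈ T, gind (XPv A B π p.val ω)) :=
    Finset.measurable_sum T (fun p _ => hYmeas p)
  have h_int : Integrable (fun ω => Real.exp (t * ∑ p ∈ T, gind (XPv A B π p.val ω))) P := by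
    refine (integrable_const (1:ℝ)).mono' ((hXmeas.const_mul t).exp).aestronglyMeasurable ?_
    refine Filter.Eventually.of_forall (fun ω => ?_)
    rw [Real.norm_eq_abs, Real.abs_exp, Real.exp_le_one_iff]
    exact mul_nonpos_of_nonpos_of_nonneg ht (Finset.sum_nonneg fun p _ => gind_nonneg _)
  have hmain := measure_le_le_exp_mul_mgf (μ := P)
    (X := fun ω => ∑ p ∈ T, gind (XPv A B π p.val ω)) ε ht h_int
  have hmgf : mgf (fun ω => ∑ p ∈ T, gind (XPv A B π p.val ω)) P t
      = (1 - q * s / 2) ^ T.card := by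
    have hfun : (fun ω => ∑ p ∈ T, gind (XPv A B π p.val ω))
        = ∑ p ∈ T, (fun ω => gind (XPv A B π p.val ω)) := by
      funext ω; rw [Finset.sum_apply]
    rw [hfun, hYindep.mgf_sum hYmeas]
    have hone : ∀ p ∈ T, mgf (fun ω => gind (XPv A B π p.val ω)) P t = 1 - q * s / 2 := by
      intro p _
      have hE : MeasurableSet ((fun ω => XPv A B π p.val ω) ⁻¹' {((true:Bool), (true:Bool))}) :=
        (hM.meas p.val.1 p.val.2) (measBB _)
      have hrepr : (fun ω => Real.exp (t * gind (XPv A B π p.val ω)))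
          = fun ω => 1 + (Real.exp t - 1) *
              Set.indicator ((fun ω => XPv A B π p.val ω) ⁻¹' {((true:Bool),(true:Bool))})
                (fun _ => (1:ℝ)) ω := by
        funext ω
        by_cases hzz : XPv A B π p.val ω = (true, true)
        · rw [Set.indicator_of_mem (by exact hzz)]
          simp only [gind, if_pos hzz, mul_one]
          ring
        · rw [Set.indicator_of_notMem (by exact hzz)]
          simp only [gind, if_neg hzz, mul_zero, add_zero, Real.exp_zero]
      unfold mgf
      rw [hrepr, integral_add (integrable_const _)
        (((integrable_const (1:ℝ)).indicator hE).const_mul _), integral_const,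
        MeasureTheory.integral_const_mul, MeasureTheory.integral_indicator_const _ hE]
      have hPE : P ((fun ω => XPv A B π p.val ω) ⁻¹' {((true:Bool), (true:Bool))})
          = ENNReal.ofReal (q * s) := prob_tt hM p.2
      simp only [measureReal_def]
      rw [hPE, ENNReal.toReal_ofReal hqs0]
      have hexp : Real.exp t = 2⁻¹ := by
        rw [ht_def, Real.exp_neg, Real.exp_log two_pos]
      rw [hexp]
      simp [measure_univ]
      ring
    rw [Finset.prod_congr rfl hone, Finset.prod_const]
  rw [hmgf] at hmain
  have hneg : -t = Real.log 2 := by rw [ht_def, neg_neg]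
  rw [hneg] at hmain
  calc P {ω | ∑ p ∈ T, gind (XPv A B π p.val ω) ≤ ε}
      = ENNReal.ofReal ((P {ω | ∑ p ∈ T, gind (XPv A B π p.val ω) ≤ ε}).toReal) :=
        (ENNReal.ofReal_toReal (measure_ne_top P _)).symm
    _ ≤ ENNReal.ofReal (Real.exp (Real.log 2 * ε) * (1 - q * s / 2) ^ T.card) :=
        ENNReal.ofReal_le_ofReal hmain

lemma factorial_bound : ∀ k : ℕ, (k : ℝ)^k ≤ 3^k * (Nat.factorial k) := by
  intro k
  induction k with
  | zero => simp
  | succ k ih =>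
    rcases Nat.eq_zero_or_pos k with rfl | hk
    · norm_num
    · have hk' : (0:ℝ) < k := by exact_mod_cast hk
      have hkk : (0:ℝ) ≤ (k:ℝ)^k := by positivity
      have h2 : (1 + 1/(k:ℝ))^k ≤ 3 := by
        have hle : (1 + 1/(k:ℝ)) ≤ Real.exp (1/k) := by
          have := Real.add_one_le_exp (1/(k:ℝ)); linarith
        calc (1 + 1/(k:ℝ))^k ≤ (Real.exp (1/k))^k := by
              apply pow_le_pow_left₀ (by positivity) hle
          _ = Real.exp 1 := by
              rw [← Real.exp_nat_mul]; congr 1; field_simp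
          _ ≤ 3 := by have := Real.exp_one_lt_d9; linarith
      have h1 : ((k:ℝ)+1)^k ≤ 3 * (k:ℝ)^k := by
        have e : ((k:ℝ)+1)^k = (k:ℝ)^k * (1 + 1/k)^k := by
          rw [← mul_pow]; congr 1; field_simp
        rw [e]
        nlinarith [pow_nonneg hk'.le k]
      have hfq : (0:ℝ) ≤ (Nat.factorial k : ℝ) := by positivity
      have h3k : (0:ℝ) ≤ 3^k := by positivity
      push_cast
      calc ((k:ℝ)+1)^(k+1) = ((k:ℝ)+1) * ((k:ℝ)+1)^k := by ring
        _ ≤ ((k:ℝ)+1) * (3 * (k:ℝ)^k) := by nlinarith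
        _ ≤ ((k:ℝ)+1) * (3 * (3^k * (Nat.factorial k))) := by nlinarith
        _ = 3^(k+1) * (((k:ℝ)+1) * (Nat.factorial k)) := by ring
        _ = 3^(k+1) * ((Nat.factorial (k+1) : ℕ) : ℝ) := by
            rw [Nat.factorial_succ]; push_cast; ring

lemma choose_bound {mm k : ℕ} (hk : 1 ≤ k) : (mm.choose k : ℝ) ≤ (3 * mm / k)^k := by
  have h1 : (mm.choose k : ℝ) ≤ (mm:ℝ)^k / (Nat.factorial k) := Nat.choose_le_pow_div k mm
  have h2 := factorial_bound k
  have hk' : (0:ℝ) < k := by exact_mod_cast hk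
  have hf : (0:ℝ) < (Nat.factorial k : ℝ) := by exact_mod_cast k.factorial_pos
  refine h1.trans ?_
  have h3 : (3 * (mm:ℝ) / k)^k = 3^k * (mm:ℝ)^k / (k:ℝ)^k := by
    rw [div_pow, mul_pow]
  rw [h3, div_le_div_iff₀ hf (by positivity)]
  have hmk : (0:ℝ) ≤ (mm:ℝ)^k := by positivity
  nlinarith [mul_le_mul_of_nonneg_left h2 hmk]

lemma nat_div3_lb (a : ℕ) : a ≤ 3 * ((a + 2) / 3) := by omega

lemma exists_indep_subset (π : Equiv.Perm (Fin n)) (M : Finset (Fin n × Fin n)) :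
    (∀ t ∈ M, ∀ t' ∈ M, t.1 = t'.1 → t = t') →
    (∀ t ∈ M, ∀ t' ∈ M, t.2 = t'.2 → t = t') →
    ∃ I ⊆ M, M.card ≤ 3 * I.card ∧ ∀ t ∈ I, ∀ t' ∈ I, t ≠ t' → t.2 ≠ π t'.1 := by
  classical
  induction M using Finset.strongInduction with
  | _ M ih =>
    intro hf hs
    rcases M.eq_empty_or_nonempty with rfl | ⟨t0, ht0⟩
    · exact ⟨∅, Finset.Subset.refl _, by simp, by simp⟩
    · set Cf := M.filter (fun t' => t' = t0 ∨ t'.2 = π t0.1 ∨ t0.2 = π t'.1) with hCf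
      have ht0Cf : t0 ∈ Cf := Finset.mem_filter.mpr ⟨ht0, Or.inl rfl⟩
      set M' := M \ Cf with hM'
      have hss : M' ⊂ M :=
        Finset.sdiff_ssubset (Finset.filter_subset _ _) ⟨t0, ht0Cf⟩
      have hsubM : M' ⊆ M := Finset.sdiff_subset
      obtain ⟨I', hI'sub, hI'card, hI'ind⟩ := ih M' hss
        (fun t ht t' ht' => hf t (hsubM ht) t' (hsubM ht'))
        (fun t ht t' ht' => hs t (hsubM ht) t' (hsubM ht'))
      have ht0I' : t0 ∉ I' := fun h => by
        have hh := hI'sub h; rw [hM', Finset.mem_sdiff] at hh; exact hh.2 ht0Cf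
      refine ⟨insert t0 I', ?_, ?_, ?_⟩
      · intro x hx
        rcases Finset.mem_insert.mp hx with rfl | hx'
        · exact ht0
        · exact hsubM (hI'sub hx')
      · have hCf3 : Cf.card ≤ 3 := by
          have hsub3 : Cf ⊆ insert t0 ((M.filter (fun t' => t'.2 = π t0.1))
              ∪ (M.filter (fun t' => t0.2 = π t'.1))) := by
            intro x hx
            rw [hCf, Finset.mem_filter] at hx
            rcases hx.2 with h | h | h
            · exact Finset.mem_insert.mpr (Or.inl h)
            · exact Finset.mem_insert.mpr (Or.inr (Finset.mem_union_left _
                (Finset.mem_filter.mpr ⟨hx.1, h⟩)))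
            · exact Finset.mem_insert.mpr (Or.inr (Finset.mem_union_right _
                (Finset.mem_filter.mpr ⟨hx.1, h⟩)))
          have hc1 : (M.filter (fun t' => t'.2 = π t0.1)).card ≤ 1 := by
            rw [Finset.card_le_one]
            intro a ha b hb
            rw [Finset.mem_filter] at ha hb
            exact hs a ha.1 b hb.1 (ha.2.trans hb.2.symm)
          have hc2 : (M.filter (fun t' => t0.2 = π t'.1)).card ≤ 1 := by
            rw [Finset.card_le_one]
            intro a ha b hb
            rw [Finset.mem_filter] at ha hb
            have : π a.1 = π b.1 := ha.2.symm.trans hb.2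
            exact hf a ha.1 b hb.1 (π.injective this)
          calc Cf.card ≤ _ := Finset.card_le_card hsub3
            _ ≤ ((M.filter (fun t' => t'.2 = π t0.1))
              ∪ (M.filter (fun t' => t0.2 = π t'.1))).card + 1 := Finset.card_insert_le _ _
            _ ≤ ((M.filter (fun t' => t'.2 = π t0.1)).card
              + (M.filter (fun t' => t0.2 = π t'.1)).card) + 1 := by
                have := Finset.card_union_le (M.filter (fun t' => t'.2 = π t0.1))
                  (M.filter (fun t' => t0.2 = π t'.1))
                omega
            _ ≤ 3 := by omega
        have hCfM : Cf ⊆ M := by rw [hCf]; exact Finset.filter_subset _ _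
        have hM'card : M'.card = M.card - Cf.card := by
          rw [hM']; exact Finset.card_sdiff_of_subset hCfM
        have hCfle : Cf.card ≤ M.card := Finset.card_le_card hCfM
        rw [Finset.card_insert_of_notMem ht0I']
        omega
      · intro a ha b hb hab
        rcases Finset.mem_insert.mp ha with rfl | ha' <;>
          rcases Finset.mem_insert.mp hb with rfl | hb'
        · exact absurd rfl hab
        · have hbM := hI'sub hb'; rw [hM', Finset.mem_sdiff] at hbM
          intro e; exact hbM.2 (Finset.mem_filter.mpr ⟨hbM.1, Or.inr (Or.inr e)⟩)
        · have haM := hI'sub ha'; rw [hM', Finset.mem_sdiff] at haM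
          intro e; exact haM.2 (Finset.mem_filter.mpr ⟨haM.1, Or.inr (Or.inl e)⟩)
        · exact hI'ind a ha' b hb' hab

lemma sum_gind_eq (hM : IsCorrER P n q s A B π) (S R : Finset (Fin n))
    (hRS : ∀ i ∈ R, i ∉ S) (ω : Ω) :
    ∑ p ∈ pairsOf (R ×ˢ S), gind (XPv A B π p.val ω)
      = ∑ i ∈ R, ((seedCount (A ω) (B ω) π S i (π i) : ℕ) : ℝ) := by
  classical
  have hne : ∀ x ∈ R ×ˢ S, x.1 ≠ x.2 := by
    intro x hx e; rw [Finset.mem_product] at hx; exact hRS x.1 hx.1 (e ▸ hx.2)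
  have hinj : ∀ x ∈ R ×ˢ S, ∀ y ∈ R ×ˢ S, sp x = sp y → x = y := by
    intro x hx y hy
    rw [Finset.mem_product] at hx hy
    exact sp_eq_of (hRS _ hx.1) hx.2 (hRS _ hy.1) hy.2
  rw [sum_pairsOf hne hinj (fun x => gind (XPv A B π x ω))]
  have hsp : ∀ x ∈ R ×ˢ S, gind (XPv A B π (sp x) ω) = gind (XPv A B π x ω) := by
    intro x _
    unfold sp; split_ifs with h
    · rfl
    · show gind (A ω x.2 x.1, B ω (π x.2) (π x.1)) = gind (A ω x.1 x.2, B ω (π x.1) (π x.2))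
      rw [hM.symmA ω x.2 x.1, hM.symmB ω (π x.2) (π x.1)]
  rw [Finset.sum_congr rfl hsp, Finset.sum_product]
  refine Finset.sum_congr rfl (fun i _ => ?_)
  rw [seedCount, Finset.card_filter]
  push_cast
  refine Finset.sum_congr rfl (fun j _ => ?_)
  simp [gind, XPv, Prod.ext_iff]

set_option maxHeartbeats 1000000 in
lemma E1_bound (hM : IsCorrER P n q s A B π) [IsProbabilityMeasure P]
    (m : ℕ) (hn : 2 ≤ n) (hm : 96 * Real.log n ≤ m * (q * s)) :
    P {ω | ∃ SS RR : Finset (Fin n), SS.card = m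
        ∧ RR.card = ⌊96 * Real.log n / (q * s)⌋₊ + 1
        ∧ (∀ i ∈ RR, i ∉ SS)
        ∧ ∀ i ∈ RR, ((seedCount (A ω) (B ω) π SS i (π i) : ℕ) : ℝ) < (m : ℝ) * q * s / 2}
      ≤ ENNReal.ofReal (1 / (n : ℝ) ^ m) := by
  classical
  obtain ⟨hq, hs, hs1, hqs1, hm1⟩ := params hM m hn hm
  set L : ℝ := Real.log n with hLdef
  have hn1 : (1:ℝ) < n := by exact_mod_cast hn.trans_lt' one_lt_two
  have hL : 0 < L := Real.log_pos hn1
  have hqs : 0 < q * s := mul_pos hq hs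
  set u : ℝ := 96 * L / (q * s) with hu
  set uF : ℕ := ⌊u⌋₊ + 1 with huF
  set K : ℝ := (m : ℝ) * q * s / 2 with hK
  have huu : u < uF := by
    rw [huF]; push_cast; exact Nat.lt_floor_add_one u
  have hupos : 0 ≤ u := by positivity
  have huF1 : (uF : ℝ) ≤ u + 1 := by
    rw [huF]; push_cast
    have := Nat.floor_le hupos; linarith
  have hum : u ≤ m := by
    rw [hu, div_le_iff₀ hqs]; linarith
  set idx : Finset (Finset (Fin n) × Finset (Fin n)) :=
    Finset.univ.filter (fun SR => SR.1.card = m ∧ SR.2.card = uF ∧ ∀ i ∈ SR.2, i ∉ SR.1)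
    with hidx
  set Ev : Finset (Fin n) × Finset (Fin n) → Set Ω := fun x =>
    {ω | ∀ i ∈ x.2, ((seedCount (A ω) (B ω) π x.1 i (π i) : ℕ) : ℝ) < K} with hEv
  have hsub : {ω | ∃ SS RR : Finset (Fin n), SS.card = m
        ∧ RR.card = ⌊96 * Real.log n / (q * s)⌋₊ + 1
        ∧ (∀ i ∈ RR, i ∉ SS)
        ∧ ∀ i ∈ RR, ((seedCount (A ω) (B ω) π SS i (π i) : ℕ) : ℝ) < (m : ℝ) * q * s / 2}
      ⊆ ⋃ x ∈ idx, Ev x := by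
    rintro ω ⟨SS, RR, h1, h2, h3, h4⟩
    refine Set.mem_biUnion (?_ : (SS, RR) ∈ idx) ?_
    · rw [hidx, Finset.mem_filter]
      exact ⟨Finset.mem_univ _, h1, h2, h3⟩
    · show ∀ i ∈ RR, ((seedCount (A ω) (B ω) π SS i (π i) : ℕ) : ℝ) < K
      rw [hK]; exact h4
  set b : ℝ := Real.exp (Real.log 2 * ((uF : ℝ) * K)) * (1 - q * s / 2) ^ (uF * m) with hb
  have hperev : ∀ x ∈ idx, P (Ev x) ≤ ENNReal.ofReal b := by
    intro x hx
    rw [hidx, Finset.mem_filter] at hx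
    obtain ⟨-, hx1, hx2, hx3⟩ := hx
    have hTcard : (pairsOf (x.2 ×ˢ x.1)).card = uF * m := by
      have hne : ∀ y ∈ x.2 ×ˢ x.1, y.1 ≠ y.2 := by
        intro y hy e; rw [Finset.mem_product] at hy; exact hx3 y.1 hy.1 (e ▸ hy.2)
      have hinj : ∀ y ∈ x.2 ×ˢ x.1, ∀ z ∈ x.2 ×ˢ x.1, sp y = sp z → y = z := by
        intro y hy z hz
        rw [Finset.mem_product] at hy hz
        exact sp_eq_of (hx3 _ hy.1) hy.2 (hx3 _ hz.1) hz.2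
      rw [card_pairsOf hne hinj, Finset.card_product, hx1, hx2]
    have hincl : Ev x ⊆ {ω | ∑ p ∈ pairsOf (x.2 ×ˢ x.1), gind (XPv A B π p.val ω)
        ≤ (uF : ℝ) * K} := by
      intro ω hω
      show ∑ p ∈ pairsOf (x.2 ×ˢ x.1), gind (XPv A B π p.val ω) ≤ (uF : ℝ) * K
      rw [sum_gind_eq hM x.1 x.2 hx3 ω]
      calc ∑ i ∈ x.2, ((seedCount (A ω) (B ω) π x.1 i (π i) : ℕ) : ℝ)
          ≤ ∑ _i ∈ x.2, K := Finset.sum_le_sum (fun i hi => (hω i hi).le)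
        _ = (uF : ℝ) * K := by rw [Finset.sum_const, hx2, nsmul_eq_mul]
    calc P (Ev x) ≤ P {ω | ∑ p ∈ pairsOf (x.2 ×ˢ x.1), gind (XPv A B π p.val ω)
          ≤ (uF : ℝ) * K} := measure_mono hincl
      _ ≤ ENNReal.ofReal (Real.exp (Real.log 2 * ((uF : ℝ) * K))
          * (1 - q * s / 2) ^ (pairsOf (x.2 ×ˢ x.1)).card) := chernoff hM hqs.le _ _
      _ = ENNReal.ofReal b := by rw [hTcard]
  have hcard : (idx.card : ℝ) ≤ (n : ℝ) ^ m * (n : ℝ) ^ uF := by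
    have hsubidx : idx ⊆ (Finset.univ.powersetCard m) ×ˢ (Finset.univ.powersetCard uF) := by
      intro x hx
      rw [hidx, Finset.mem_filter] at hx
      exact Finset.mem_product.mpr ⟨Finset.mem_powersetCard_univ.mpr hx.2.1,
        Finset.mem_powersetCard_univ.mpr hx.2.2.1⟩
    have h1 : idx.card ≤ n.choose m * n.choose uF := by
      have := Finset.card_le_card hsubidx
      rwa [Finset.card_product, Finset.card_powersetCard, Finset.card_powersetCard,
        Finset.card_univ, Fintype.card_fin] at this
    calc (idx.card : ℝ) ≤ (n.choose m * n.choose uF : ℕ) := by exact_mod_cast h1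
      _ ≤ (n : ℝ) ^ m * (n : ℝ) ^ uF := by
          push_cast
          have c1 : (n.choose m : ℝ) ≤ (n : ℝ) ^ m := by exact_mod_cast Nat.choose_le_pow n m
          have c2 : (n.choose uF : ℝ) ≤ (n : ℝ) ^ uF := by exact_mod_cast Nat.choose_le_pow n uF
          have p1 : (0:ℝ) ≤ (n.choose m : ℝ) := by positivity
          have p2 : (0:ℝ) ≤ (n : ℝ) ^ m := by positivity
          nlinarith
  have hnum : (idx.card : ℝ) * b ≤ 1 / (n : ℝ) ^ m := by
    have hbase : (0:ℝ) ≤ 1 - q * s / 2 := by linarith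
    have h1exp : (1 - q * s / 2) ^ (uF * m) ≤ Real.exp (-(((uF * m : ℕ) : ℝ) * (q * s / 2))) := by
      calc (1 - q * s / 2) ^ (uF * m) ≤ (Real.exp (-(q * s / 2))) ^ (uF * m) := by
            apply pow_le_pow_left₀ hbase
            have := Real.add_one_le_exp (-(q * s / 2)); linarith
        _ = Real.exp (-(((uF * m : ℕ) : ℝ) * (q * s / 2))) := by
            rw [← Real.exp_nat_mul]; ring_nf
    have hnpow : ∀ k : ℕ, ((n : ℝ)) ^ k = Real.exp (k * L) := by
      intro k
      rw [Real.exp_nat_mul, hLdef, Real.exp_log (by linarith : (0:ℝ) < n)]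
    have hstep : (idx.card : ℝ) * b
        ≤ Real.exp ((m : ℝ) * L + (uF : ℝ) * L + Real.log 2 * ((uF : ℝ) * K)
            - ((uF * m : ℕ) : ℝ) * (q * s / 2)) := by
      have e1 : Real.exp ((m : ℝ) * L + (uF : ℝ) * L + Real.log 2 * ((uF : ℝ) * K)
            - ((uF * m : ℕ) : ℝ) * (q * s / 2))
          = ((n : ℝ) ^ m * (n : ℝ) ^ uF) * (Real.exp (Real.log 2 * ((uF : ℝ) * K))
            * Real.exp (-(((uF * m : ℕ) : ℝ) * (q * s / 2)))) := by
        rw [hnpow m, hnpow uF, ← Real.exp_add, ← Real.exp_add, ← Real.exp_add]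
        congr 1; ring
      rw [e1, hb]
      have hb0 : (0:ℝ) ≤ Real.exp (Real.log 2 * ((uF : ℝ) * K)) := (Real.exp_pos _).le
      have hc0 : (0:ℝ) ≤ (idx.card : ℝ) := Nat.cast_nonneg _
      have hpow0 : (0:ℝ) ≤ (1 - q * s / 2) ^ (uF * m) := pow_nonneg hbase _
      have hn0 : (0:ℝ) ≤ (n : ℝ) ^ m * (n : ℝ) ^ uF := by positivity
      calc (idx.card : ℝ) * (Real.exp (Real.log 2 * ((uF : ℝ) * K))
              * (1 - q * s / 2) ^ (uF * m))
          ≤ ((n : ℝ) ^ m * (n : ℝ) ^ uF) * (Real.exp (Real.log 2 * ((uF : ℝ) * K))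
              * (1 - q * s / 2) ^ (uF * m)) :=
            mul_le_mul_of_nonneg_right hcard (mul_nonneg hb0 hpow0)
        _ ≤ ((n : ℝ) ^ m * (n : ℝ) ^ uF) * (Real.exp (Real.log 2 * ((uF : ℝ) * K))
              * Real.exp (-(((uF * m : ℕ) : ℝ) * (q * s / 2)))) := by
            apply mul_le_mul_of_nonneg_left _ hn0
            exact mul_le_mul_of_nonneg_left h1exp hb0
    have hfin : (m : ℝ) * L + (uF : ℝ) * L + Real.log 2 * ((uF : ℝ) * K)
        - ((uF * m : ℕ) : ℝ) * (q * s / 2) ≤ -((m : ℝ) * L) := by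
      have hcast : ((uF * m : ℕ) : ℝ) = (uF : ℝ) * m := by push_cast; ring
      rw [hK, hcast]
      have hlog2 : Real.log 2 ≤ 0.7 := by
        have := Real.log_two_lt_d9; linarith
      have hlog2' : 0 ≤ Real.log 2 := Real.log_nonneg one_le_two
      have hmr : (1:ℝ) ≤ m := by exact_mod_cast hm1
      have huFm : (uF : ℝ) ≤ (m:ℝ) + 1 := by linarith
      have hx0 : (0:ℝ) ≤ (uF:ℝ) * ((m:ℝ) * q * s) := by positivity
      have ha : 96 * ((m : ℝ) * L) ≤ (uF : ℝ) * ((m:ℝ) * q * s) := by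
        have h96 : 96 * L = u * (q * s) := by
          rw [hu]; field_simp
        have hm0 : (0:ℝ) ≤ (m:ℝ) * (q*s) := by positivity
        have h2 := mul_le_mul_of_nonneg_right huu.le hm0
        nlinarith
      have t1 : (uF:ℝ) * L ≤ ((m:ℝ)+1) * L := mul_le_mul_of_nonneg_right huFm hL.le
      have t2 : Real.log 2 * ((uF:ℝ) * ((m:ℝ) * q * s / 2))
          - (uF:ℝ) * (m:ℝ) * (q * s / 2) ≤ -(3/20) * ((uF:ℝ) * ((m:ℝ) * q * s)) := by
        nlinarith
      have t3 : -(3/20 : ℝ) * ((uF:ℝ) * ((m:ℝ) * q * s)) ≤ -(3/20) * (96 * ((m:ℝ) * L)) := by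
        nlinarith
      have hmL : L ≤ (m:ℝ) * L := by nlinarith
      linarith
    have hone : 1 / (n : ℝ) ^ m = Real.exp (-((m:ℝ) * L)) := by
      rw [hnpow m, Real.exp_neg]; exact one_div _
    rw [hone]
    exact hstep.trans (Real.exp_le_exp.mpr hfin)
  calc P {ω | ∃ SS RR : Finset (Fin n), SS.card = m
        ∧ RR.card = ⌊96 * Real.log n / (q * s)⌋₊ + 1
        ∧ (∀ i ∈ RR, i ∉ SS)
        ∧ ∀ i ∈ RR, ((seedCount (A ω) (B ω) π SS i (π i) : ℕ) : ℝ) < (m : ℝ) * q * s / 2}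
      ≤ P (⋃ x ∈ idx, Ev x) := measure_mono hsub
    _ ≤ ∑ x ∈ idx, P (Ev x) := measure_biUnion_finset_le idx Ev
    _ ≤ idx.card • ENNReal.ofReal b := Finset.sum_le_card_nsmul idx _ _ hperev
    _ = ENNReal.ofReal ((idx.card : ℝ) * b) := by
        rw [nsmul_eq_mul, ← ENNReal.ofReal_natCast idx.card, ← ENNReal.ofReal_mul (Nat.cast_nonneg _)]
    _ ≤ ENNReal.ofReal (1 / (n : ℝ) ^ m) := ENNReal.ofReal_le_ofReal hnum

set_option maxHeartbeats 1000000 in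
lemma E2_bound (hM : IsCorrER P n q s A B π) [IsProbabilityMeasure P]
    (m : ℕ) (hn : 2 ≤ n) (hm : 96 * Real.log n ≤ m * (q * s)) (hs12 : 12 * q ≤ s) :
    P {ω | ∃ (SS : Finset (Fin n)) (MM : Finset (Fin n × Fin n)), SS.card = m
        ∧ MM.card = (⌊96 * Real.log n / (q * s)⌋₊ + 1 + 2) / 3
        ∧ (∀ t ∈ MM, t.1 ∉ SS)
        ∧ (∀ t ∈ MM, t.2 ∉ SS.image π)
        ∧ (∀ t ∈ MM, ∀ t' ∈ MM, t.1 = t'.1 → t = t')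
        ∧ (∀ t ∈ MM, ∀ t' ∈ MM, t.2 = t'.2 → t = t')
        ∧ (∀ t ∈ MM, ∀ t' ∈ MM, t.2 ≠ π t'.1)
        ∧ ∀ t ∈ MM, ((m:ℝ) * q * s / 2) ≤ ((seedCount (A ω) (B ω) π SS t.1 t.2 : ℕ) : ℝ)}
      ≤ ENNReal.ofReal (1 / (n : ℝ) ^ m) := by
  classical
  obtain ⟨hq, hs, hs1, hqs1, hm1⟩ := params hM m hn hm
  have hq1s : 0 ≤ q * (1 - s) := mul_nonneg hq.le (by linarith)
  set L : ℝ := Real.log n with hLdef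
  have hn1 : (1:ℝ) < n := by exact_mod_cast hn.trans_lt' one_lt_two
  have hL : 0 < L := Real.log_pos hn1
  have hqs : 0 < q * s := mul_pos hq hs
  set u : ℝ := 96 * L / (q * s) with hu
  set uG : ℕ := ⌊u⌋₊ + 1 with huG
  set vG : ℕ := (uG + 2) / 3 with hvG
  set K : ℝ := (m : ℝ) * q * s / 2 with hK
  set k0 : ℕ := ⌈K⌉₊ with hk0
  have hmr : (1:ℝ) ≤ m := by exact_mod_cast hm1
  have hKpos : 0 < K := by rw [hK]; positivity
  have hk01 : 1 ≤ k0 := by rw [hk0]; exact Nat.ceil_pos.mpr hKpos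
  have hKk0 : K ≤ k0 := Nat.le_ceil K
  have huu : u < uG := by rw [huG]; push_cast; exact Nat.lt_floor_add_one u
  have hupos : 0 ≤ u := by positivity
  have huG1 : (uG : ℝ) ≤ u + 1 := by
    rw [huG]; push_cast; have := Nat.floor_le hupos; linarith
  have hum : u ≤ m := by rw [hu, div_le_iff₀ hqs]; linarith
  have hvGl : u / 3 ≤ (vG : ℝ) := by
    have h3 : uG ≤ 3 * vG := by rw [hvG]; exact nat_div3_lb uG
    have h3' : (uG : ℝ) ≤ 3 * vG := by exact_mod_cast h3
    linarith
  have hvGu : (vG : ℝ) ≤ u / 3 + 1 := by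
    have h3 : 3 * vG ≤ uG + 2 := by
      have := Nat.div_mul_le_self (uG + 2) 3
      rw [hvG]; omega
    have h3' : (3 : ℝ) * vG ≤ (uG : ℝ) + 2 := by exact_mod_cast h3
    linarith
  set idx : Finset (Finset (Fin n) × Finset (Fin n × Fin n)) :=
    Finset.univ.filter (fun x => x.1.card = m ∧ x.2.card = vG
      ∧ (∀ t ∈ x.2, t.1 ∉ x.1) ∧ (∀ t ∈ x.2, t.2 ∉ x.1.image π)
      ∧ (∀ t ∈ x.2, ∀ t' ∈ x.2, t.1 = t'.1 → t = t')
      ∧ (∀ t ∈ x.2, ∀ t' ∈ x.2, t.2 = t'.2 → t = t')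
      ∧ (∀ t ∈ x.2, ∀ t' ∈ x.2, t.2 ≠ π t'.1)) with hidx
  set Ev : Finset (Fin n) × Finset (Fin n × Fin n) → Set Ω := fun x =>
    {ω | ∀ t ∈ x.2, K ≤ ((seedCount (A ω) (B ω) π x.1 t.1 t.2 : ℕ) : ℝ)} with hEv
  have hsub : {ω | ∃ (SS : Finset (Fin n)) (MM : Finset (Fin n × Fin n)), SS.card = m
        ∧ MM.card = (⌊96 * Real.log n / (q * s)⌋₊ + 1 + 2) / 3
        ∧ (∀ t ∈ MM, t.1 ∉ SS)
        ∧ (∀ t ∈ MM, t.2 ∉ SS.image π)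
        ∧ (∀ t ∈ MM, ∀ t' ∈ MM, t.1 = t'.1 → t = t')
        ∧ (∀ t ∈ MM, ∀ t' ∈ MM, t.2 = t'.2 → t = t')
        ∧ (∀ t ∈ MM, ∀ t' ∈ MM, t.2 ≠ π t'.1)
        ∧ ∀ t ∈ MM, ((m:ℝ) * q * s / 2) ≤ ((seedCount (A ω) (B ω) π SS t.1 t.2 : ℕ) : ℝ)}
      ⊆ ⋃ x ∈ idx, Ev x := by
    rintro ω ⟨SS, MM, h1, h2, h3, h4, h5, h6, h7, h8⟩
    refine Set.mem_biUnion (?_ : (SS, MM) ∈ idx) ?_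
    · rw [hidx, Finset.mem_filter]
      exact ⟨Finset.mem_univ _, h1, h2, h3, h4, h5, h6, h7⟩
    · show ∀ t ∈ MM, K ≤ ((seedCount (A ω) (B ω) π SS t.1 t.2 : ℕ) : ℝ)
      rw [hK]; exact h8
  set b : ℝ := ((m.choose k0 : ℕ) : ℝ) ^ vG * q ^ (vG * k0 + vG * k0) with hb
  have hb0 : (0:ℝ) ≤ b := by rw [hb]; positivity
  have hperev : ∀ x ∈ idx, P (Ev x) ≤ ENNReal.ofReal b := by
    intro x hx
    rw [hidx, Finset.mem_filter] at hx
    obtain ⟨-, hx1, hx2, hx3, hx4, hx5, hx6, hx7⟩ := hx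
    set S := x.1 with hSdef
    set M := x.2 with hMdef
    set G : Finset ((Fin n × Fin n) → Finset (Fin n)) :=
      Finset.univ.filter (fun g => (∀ t ∈ M, g t ⊆ S ∧ (g t).card = k0) ∧ ∀ t ∉ M, g t = ∅)
      with hG
    set Dem : ((Fin n × Fin n) → Finset (Fin n)) → Set Ω := fun g =>
      {ω | ∀ t ∈ M, ∀ j ∈ g t, A ω t.1 j = true ∧ B ω t.2 (π j) = true} with hDem
    have hEvsub : Ev x ⊆ ⋃ g ∈ G, Dem g := by
      intro ω hω
      have hω' : ∀ t ∈ M, K ≤ ((seedCount (A ω) (B ω) π S t.1 t.2 : ℕ) : ℝ) := hω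
      have hch : ∀ t, t ∈ M →
          ∃ T', T' ⊆ S.filter (fun j => A ω t.1 j = true ∧ B ω t.2 (π j) = true)
            ∧ T'.card = k0 := by
        intro t ht
        apply Finset.exists_subset_card_eq
        have hcount : K ≤ ((seedCount (A ω) (B ω) π S t.1 t.2 : ℕ) : ℝ) := hω' t ht
        have hceil : k0 ≤ seedCount (A ω) (B ω) π S t.1 t.2 := by
          rw [hk0]; exact Nat.ceil_le.mpr hcount
        exact hceil
      choose! TT hTT1 hTT2 using hch
      set g : (Fin n × Fin n) → Finset (Fin n) := fun t => if t ∈ M then TT t else ∅ with hg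
      have hgG : g ∈ G := by
        rw [hG, Finset.mem_filter]
        refine ⟨Finset.mem_univ _, fun t ht => ?_, fun t ht => if_neg ht⟩
        rw [hg]; simp only [if_pos ht]
        exact ⟨(hTT1 t ht).trans (Finset.filter_subset _ _), hTT2 t ht⟩
      refine Set.mem_biUnion hgG ?_
      show ∀ t ∈ M, ∀ j ∈ g t, A ω t.1 j = true ∧ B ω t.2 (π j) = true
      intro t ht j hj
      rw [hg] at hj; simp only [if_pos ht] at hj
      exact (Finset.mem_filter.mp (hTT1 t ht hj)).2
    have hdem : ∀ g ∈ G, P (Dem g) ≤ ENNReal.ofReal q ^ (vG * k0 + vG * k0) := by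
      intro g hg
      rw [hG, Finset.mem_filter] at hg
      obtain ⟨-, hg1, hg2⟩ := hg
      set VA : Finset (Fin n × Fin n) :=
        M.biUnion (fun t => (g t).image (fun j => (t.1, j))) with hVAdef
      set VB : Finset (Fin n × Fin n) :=
        M.biUnion (fun t => (g t).image (fun j => (π.symm t.2, j))) with hVBdef
      have hVAmem : ∀ x' ∈ VA, ∃ t ∈ M, ∃ j ∈ g t, x' = (t.1, j) := by
        intro x' hx'
        rw [hVAdef, Finset.mem_biUnion] at hx'
        obtain ⟨t, ht, hx'⟩ := hx'
        obtain ⟨j, hj, rfl⟩ := Finset.mem_image.mp hx'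
        exact ⟨t, ht, j, hj, rfl⟩
      have hVBmem : ∀ y ∈ VB, ∃ t ∈ M, ∃ j ∈ g t, y = (π.symm t.2, j) := by
        intro y hy
        rw [hVBdef, Finset.mem_biUnion] at hy
        obtain ⟨t, ht, hy⟩ := hy
        obtain ⟨j, hj, rfl⟩ := Finset.mem_image.mp hy
        exact ⟨t, ht, j, hj, rfl⟩
      have hVA : ∀ x' ∈ VA, x'.1 ∉ S ∧ x'.2 ∈ S := by
        intro x' hx'
        obtain ⟨t, ht, j, hj, rfl⟩ := hVAmem x' hx'
        exact ⟨hx3 t ht, (hg1 t ht).1 hj⟩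
      have hVB : ∀ y ∈ VB, y.1 ∉ S ∧ y.2 ∈ S := by
        intro y hy
        obtain ⟨t, ht, j, hj, rfl⟩ := hVBmem y hy
        refine ⟨fun hmem => ?_, (hg1 t ht).1 hj⟩
        exact hx4 t ht (Finset.mem_image.mpr ⟨π.symm t.2, hmem, Equiv.apply_symm_apply π t.2⟩)
      have hAB : ∀ x' ∈ VA, ∀ y ∈ VB, x' ≠ y := by
        intro x' hx' y hy he
        obtain ⟨t, ht, j, hj, rfl⟩ := hVAmem x' hx'
        obtain ⟨t', ht', j', hj', rfl⟩ := hVBmem y hy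
        have h1' : t.1 = π.symm t'.2 := congrArg Prod.fst he
        have h2' : t'.2 = π t.1 := by rw [h1', Equiv.apply_symm_apply]
        exact hx7 t' ht' t ht h2'
      have hDemsub : Dem g ⊆ {ω | (∀ x' ∈ VA, A ω x'.1 x'.2 = true)
          ∧ ∀ y ∈ VB, B ω (π y.1) (π y.2) = true} := by
        intro ω hω
        have hω' : ∀ t ∈ M, ∀ j ∈ g t, A ω t.1 j = true ∧ B ω t.2 (π j) = true := hω
        constructor
        · intro x' hx'
          obtain ⟨t, ht, j, hj, rfl⟩ := hVAmem x' hx'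
          exact (hω' t ht j hj).1
        · intro y hy
          obtain ⟨t, ht, j, hj, rfl⟩ := hVBmem y hy
          show B ω (π (π.symm t.2)) (π j) = true
          rw [Equiv.apply_symm_apply]
          exact (hω' t ht j hj).2
      have hVAcard : VA.card = vG * k0 := by
        rw [hVAdef, Finset.card_biUnion]
        · calc ∑ t ∈ M, ((g t).image (fun j => (t.1, j))).card
              = ∑ _t ∈ M, k0 := by
                refine Finset.sum_congr rfl fun t ht => ?_
                rw [Finset.card_image_of_injective _
                  (fun a b hab => (Prod.ext_iff.mp hab).2), (hg1 t ht).2]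
            _ = vG * k0 := by rw [Finset.sum_const, hx2, smul_eq_mul]
        · intro t ht t' ht' hne
          rw [Function.onFun, Finset.disjoint_left]
          intro a ha ha'
          obtain ⟨j, _, rfl⟩ := Finset.mem_image.mp ha
          obtain ⟨j', _, he⟩ := Finset.mem_image.mp ha'
          exact hne (hx5 t ht t' ht' (congrArg Prod.fst he).symm)
      have hVBcard : VB.card = vG * k0 := by
        rw [hVBdef, Finset.card_biUnion]
        · calc ∑ t ∈ M, ((g t).image (fun j => (π.symm t.2, j))).card
              = ∑ _t ∈ M, k0 := by
                refine Finset.sum_congr rfl fun t ht => ?_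
                rw [Finset.card_image_of_injective _
                  (fun a b hab => (Prod.ext_iff.mp hab).2), (hg1 t ht).2]
            _ = vG * k0 := by rw [Finset.sum_const, hx2, smul_eq_mul]
        · intro t ht t' ht' hne
          rw [Function.onFun, Finset.disjoint_left]
          intro a ha ha'
          obtain ⟨j, _, rfl⟩ := Finset.mem_image.mp ha
          obtain ⟨j', _, he⟩ := Finset.mem_image.mp ha'
          have : π.symm t.2 = π.symm t'.2 := (congrArg Prod.fst he).symm
          exact hne (hx6 t ht t' ht' (π.symm.injective this))
      calc P (Dem g) ≤ P {ω | (∀ x' ∈ VA, A ω x'.1 x'.2 = true)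
            ∧ ∀ y ∈ VB, B ω (π y.1) (π y.2) = true} := measure_mono hDemsub
        _ ≤ ENNReal.ofReal q ^ (VA.card + VB.card) :=
            prob_demands hM hqs.le hq1s S VA VB hVA hVB hAB
        _ = ENNReal.ofReal q ^ (vG * k0 + vG * k0) := by rw [hVAcard, hVBcard]
    have hGcard : G.card ≤ (m.choose k0) ^ vG := by
      have hmap : ∀ g ∈ G, (fun (t : Fin n × Fin n) (_ : t ∈ M) => g t)
          ∈ M.pi (fun _ => S.powersetCard k0) := by
        intro g hg
        rw [hG, Finset.mem_filter] at hg
        exact Finset.mem_pi.mpr fun t ht =>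
          Finset.mem_powersetCard.mpr ⟨(hg.2.1 t ht).1, (hg.2.1 t ht).2⟩
      have hinj : ∀ g₁ ∈ G, ∀ g₂ ∈ G,
          (fun (t : Fin n × Fin n) (_ : t ∈ M) => g₁ t)
            = (fun (t : Fin n × Fin n) (_ : t ∈ M) => g₂ t) → g₁ = g₂ := by
        intro g₁ hg₁ g₂ hg₂ he
        rw [hG, Finset.mem_filter] at hg₁ hg₂
        funext t
        by_cases ht : t ∈ M
        · exact congrFun (congrFun he t) ht
        · rw [hg₁.2.2 t ht, hg₂.2.2 t ht]
      have hle := Finset.card_le_card_of_injOn _ hmap hinj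
      rwa [Finset.card_pi, Finset.prod_congr rfl
        (fun t _ => by rw [Finset.card_powersetCard, hx1]), Finset.prod_const, hx2] at hle
    calc P (Ev x) ≤ P (⋃ g ∈ G, Dem g) := measure_mono hEvsub
      _ ≤ ∑ g ∈ G, P (Dem g) := measure_biUnion_finset_le _ _
      _ ≤ G.card • ENNReal.ofReal q ^ (vG * k0 + vG * k0) :=
          Finset.sum_le_card_nsmul _ _ _ hdem
      _ ≤ ((m.choose k0) ^ vG : ℕ) * ENNReal.ofReal q ^ (vG * k0 + vG * k0) := by
          rw [nsmul_eq_mul]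
          exact mul_le_mul_left (Nat.cast_le.mpr hGcard) _
      _ = ENNReal.ofReal b := by
          rw [← ENNReal.ofReal_pow hq.le, ← ENNReal.ofReal_natCast,
            ← ENNReal.ofReal_mul (Nat.cast_nonneg _), hb]
          congr 2
          push_cast; ring
  have hcard : (idx.card : ℝ) ≤ (n : ℝ) ^ m * ((n : ℝ) * n) ^ vG := by
    have hsubidx : idx ⊆ (Finset.univ.powersetCard m) ×ˢ (Finset.univ.powersetCard vG) := by
      intro x hx
      rw [hidx, Finset.mem_filter] at hx
      exact Finset.mem_product.mpr ⟨Finset.mem_powersetCard_univ.mpr hx.2.1,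
        Finset.mem_powersetCard_univ.mpr hx.2.2.1⟩
    have h1 : idx.card ≤ n.choose m * (n * n).choose vG := by
      have hcc := Finset.card_le_card hsubidx
      rwa [Finset.card_product, Finset.card_powersetCard, Finset.card_powersetCard,
        Finset.card_univ, Finset.card_univ, Fintype.card_fin, Fintype.card_prod,
        Fintype.card_fin] at hcc
    calc (idx.card : ℝ) ≤ ((n.choose m * (n * n).choose vG : ℕ) : ℝ) := by exact_mod_cast h1
      _ ≤ (n : ℝ) ^ m * ((n : ℝ) * n) ^ vG := by
          push_cast
          have c1 : (n.choose m : ℝ) ≤ (n : ℝ) ^ m := by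
            exact_mod_cast Nat.choose_le_pow n m
          have c2 : ((n * n).choose vG : ℝ) ≤ ((n : ℝ) * n) ^ vG := by
            have := Nat.choose_le_pow (n * n) vG
            calc ((n * n).choose vG : ℝ) ≤ (((n * n) ^ vG : ℕ) : ℝ) := by exact_mod_cast this
              _ = ((n : ℝ) * n) ^ vG := by push_cast; ring
          have p1 : (0:ℝ) ≤ (n.choose m : ℝ) := Nat.cast_nonneg _
          have p2 : (0:ℝ) ≤ (n : ℝ) ^ m := by positivity
          nlinarith
  have hnum : (idx.card : ℝ) * b ≤ 1 / (n : ℝ) ^ m := by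
    have hchq : ((m.choose k0 : ℕ) : ℝ) * (q ^ 2) ^ k0 ≤ (1/2 : ℝ) ^ k0 := by
      have hcb := choose_bound (mm := m) hk01
      have hc0 : (0:ℝ) ≤ 3 * (m:ℝ) / k0 := by positivity
      have hcq : 3 * (m:ℝ) / k0 * q ^ 2 ≤ 1/2 := by
        rw [div_mul_eq_mul_div, div_le_iff₀ (by exact_mod_cast hk01.trans_lt' zero_lt_one : (0:ℝ) < (k0:ℝ))]
        have h6 : 6 * (m:ℝ) * q ^ 2 ≤ K := by
          rw [hK]; nlinarith
        nlinarith
      calc ((m.choose k0 : ℕ) : ℝ) * (q ^ 2) ^ k0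
          ≤ (3 * (m:ℝ) / k0) ^ k0 * (q ^ 2) ^ k0 := by
            apply mul_le_mul_of_nonneg_right hcb (by positivity)
        _ = (3 * (m:ℝ) / k0 * q ^ 2) ^ k0 := (mul_pow _ _ _).symm
        _ ≤ (1/2 : ℝ) ^ k0 := pow_le_pow_left₀ (by positivity) hcq k0
    have hble : b ≤ (1/2 : ℝ) ^ (k0 * vG) := by
      have he : vG * k0 + vG * k0 = (2 * k0) * vG := by ring
      have hq2 : q ^ ((2 * k0) * vG) = ((q ^ 2) ^ k0) ^ vG := by
        rw [pow_mul, pow_mul]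
      rw [hb, he, hq2, ← mul_pow]
      calc (((m.choose k0 : ℕ) : ℝ) * (q ^ 2) ^ k0) ^ vG
          ≤ ((1/2 : ℝ) ^ k0) ^ vG := by
            apply pow_le_pow_left₀ (by positivity) hchq
        _ = (1/2 : ℝ) ^ (k0 * vG) := by rw [← pow_mul]
    have hnpow : ∀ k : ℕ, ((n : ℝ)) ^ k = Real.exp (k * L) := by
      intro k
      rw [Real.exp_nat_mul, hLdef, Real.exp_log (by linarith : (0:ℝ) < n)]
    have hhalf : (1/2 : ℝ) ^ (k0 * vG) = Real.exp (-(((k0 * vG : ℕ) : ℝ) * Real.log 2)) := by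
      have : (1/2 : ℝ) = Real.exp (-Real.log 2) := by
        rw [Real.exp_neg, Real.exp_log two_pos]; norm_num
      rw [this, ← Real.exp_nat_mul]; ring_nf
    have hstep : (idx.card : ℝ) * b
        ≤ Real.exp ((m : ℝ) * L + ((2 * vG : ℕ) : ℝ) * L - ((k0 * vG : ℕ) : ℝ) * Real.log 2) := by
      have e1 : Real.exp ((m : ℝ) * L + ((2 * vG : ℕ) : ℝ) * L - ((k0 * vG : ℕ) : ℝ) * Real.log 2)
          = ((n : ℝ) ^ m * ((n : ℝ) * n) ^ vG) * (1/2 : ℝ) ^ (k0 * vG) := by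
        rw [hhalf, hnpow m]
        have : ((n : ℝ) * n) ^ vG = Real.exp (((2 * vG : ℕ) : ℝ) * L) := by
          have hnn : (n : ℝ) * n = (n : ℝ) ^ (2 : ℕ) := by ring
          rw [hnn, ← pow_mul, hnpow (2 * vG)]
        rw [this, ← Real.exp_add, ← Real.exp_add]
        congr 1 <;> ring_nf
      rw [e1]
      have hbound0 : (0:ℝ) ≤ (idx.card : ℝ) := Nat.cast_nonneg _
      have hnn0 : (0:ℝ) ≤ (n : ℝ) ^ m * ((n : ℝ) * n) ^ vG := by positivity
      calc (idx.card : ℝ) * b ≤ (idx.card : ℝ) * (1/2 : ℝ) ^ (k0 * vG) :=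
            mul_le_mul_of_nonneg_left hble hbound0
        _ ≤ ((n : ℝ) ^ m * ((n : ℝ) * n) ^ vG) * (1/2 : ℝ) ^ (k0 * vG) :=
            mul_le_mul_of_nonneg_right hcard (by positivity)
    have hfin : (m : ℝ) * L + ((2 * vG : ℕ) : ℝ) * L - ((k0 * vG : ℕ) : ℝ) * Real.log 2
        ≤ -((m : ℝ) * L) := by
      have hc1 : ((2 * vG : ℕ) : ℝ) = 2 * (vG : ℝ) := by push_cast; ring
      have hc2 : ((k0 * vG : ℕ) : ℝ) = (k0 : ℝ) * vG := by push_cast; ring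
      rw [hc1, hc2]
      have hqu : u * (q * s) = 96 * L := by rw [hu]; field_simp
      have hlog2 : (0.69 : ℝ) ≤ Real.log 2 := by
        have := Real.log_two_gt_d9; linarith
      have hk0K : (0:ℝ) ≤ K := hKpos.le
      have hvG0 : (0:ℝ) ≤ (vG : ℝ) := Nat.cast_nonneg _
      have hk0vG : 16 * ((m:ℝ) * L) ≤ (k0 : ℝ) * vG := by
        have hmm : K * (u / 3) ≤ (k0 : ℝ) * vG := by
          apply mul_le_mul hKk0 hvGl (by linarith) (Nat.cast_nonneg _)
        have hKu : K * (u / 3) = 16 * ((m:ℝ) * L) := by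
          rw [hK]
          have : (m : ℝ) * q * s / 2 * (u / 3) = (m : ℝ) * (u * (q * s)) / 6 := by ring
          rw [this, hqu]; ring
        linarith
      have hrhs : 16 * ((m:ℝ) * L) * 0.69 ≤ ((k0 : ℝ) * vG) * Real.log 2 := by
        apply mul_le_mul hk0vG hlog2 (by norm_num) (by positivity)
      have huL : u * L ≤ (m:ℝ) * L := mul_le_mul_of_nonneg_right hum hL.le
      have hmL : L ≤ (m:ℝ) * L := by nlinarith
      have hvGL : (vG : ℝ) * L ≤ (u / 3 + 1) * L := mul_le_mul_of_nonneg_right hvGu hL.le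
      nlinarith
    have hone : 1 / (n : ℝ) ^ m = Real.exp (-((m:ℝ) * L)) := by
      rw [hnpow m, Real.exp_neg]; exact one_div _
    rw [hone]
    exact hstep.trans (Real.exp_le_exp.mpr hfin)
  calc P {ω | ∃ (SS : Finset (Fin n)) (MM : Finset (Fin n × Fin n)), SS.card = m
        ∧ MM.card = (⌊96 * Real.log n / (q * s)⌋₊ + 1 + 2) / 3
        ∧ (∀ t ∈ MM, t.1 ∉ SS)
        ∧ (∀ t ∈ MM, t.2 ∉ SS.image π)
        ∧ (∀ t ∈ MM, ∀ t' ∈ MM, t.1 = t'.1 → t = t')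
        ∧ (∀ t ∈ MM, ∀ t' ∈ MM, t.2 = t'.2 → t = t')
        ∧ (∀ t ∈ MM, ∀ t' ∈ MM, t.2 ≠ π t'.1)
        ∧ ∀ t ∈ MM, ((m:ℝ) * q * s / 2) ≤ ((seedCount (A ω) (B ω) π SS t.1 t.2 : ℕ) : ℝ)}
      ≤ P (⋃ x ∈ idx, Ev x) := measure_mono hsub
    _ ≤ ∑ x ∈ idx, P (Ev x) := measure_biUnion_finset_le idx Ev
    _ ≤ idx.card • ENNReal.ofReal b := Finset.sum_le_card_nsmul idx _ _ hperev
    _ = ENNReal.ofReal ((idx.card : ℝ) * b) := by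
        rw [nsmul_eq_mul, ← ENNReal.ofReal_natCast idx.card, ← ENNReal.ofReal_mul (Nat.cast_nonneg _)]
    _ ≤ ENNReal.ofReal (1 / (n : ℝ) ^ m) := ENNReal.ofReal_le_ofReal hnum

lemma det_part (m : ℕ) (hq : 0 < q) (hs0 : 0 < s) (hn : 2 ≤ n) (ω : Ω)
    (hext0 : True)
    (hE1 : ¬ ∃ SS RR : Finset (Fin n), SS.card = m
        ∧ RR.card = ⌊96 * Real.log n / (q * s)⌋₊ + 1
        ∧ (∀ i ∈ RR, i ∉ SS)
        ∧ ∀ i ∈ RR, ((seedCount (A ω) (B ω) π SS i (π i) : ℕ) : ℝ) < (m : ℝ) * q * s / 2)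
    (hE2 : ¬ ∃ (SS : Finset (Fin n)) (MM : Finset (Fin n × Fin n)), SS.card = m
        ∧ MM.card = (⌊96 * Real.log n / (q * s)⌋₊ + 1 + 2) / 3
        ∧ (∀ t ∈ MM, t.1 ∉ SS) ∧ (∀ t ∈ MM, t.2 ∉ SS.image π)
        ∧ (∀ t ∈ MM, ∀ t' ∈ MM, t.1 = t'.1 → t = t')
        ∧ (∀ t ∈ MM, ∀ t' ∈ MM, t.2 = t'.2 → t = t')
        ∧ (∀ t ∈ MM, ∀ t' ∈ MM, t.2 ≠ π t'.1)
        ∧ ∀ t ∈ MM, ((m:ℝ) * q * s / 2) ≤ ((seedCount (A ω) (B ω) π SS t.1 t.2 : ℕ) : ℝ)) :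
    ∀ S : Finset (Fin n), S.card = m →
      ∀ π1 : Equiv.Perm (Fin n), (∀ i ∈ S, π1 i = π i) →
      (∀ π' : Equiv.Perm (Fin n), (∀ i ∈ S, π' i = π i) →
        matchWeight (A ω) (B ω) π S (m * q * s / 2) π'
          ≤ matchWeight (A ω) (B ω) π S (m * q * s / 2) π1) →
      ((univ.filter fun i => π1 i ≠ π i).card : ℝ) ≤ 192 * Real.log n / (q * s) := by
  classical
  intro S hS π1 hext hmax
  have hqs : 0 < q * s := mul_pos hq hs0
  have hL0 : 0 ≤ Real.log n := Real.log_nonneg (by exact_mod_cast hn.trans' one_le_two)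
  have hu0 : 0 ≤ 96 * Real.log n / (q * s) := by positivity
  -- row-failure count
  have hBad : (Sᶜ.filter (fun i => ¬ ((m:ℝ) * q * s / 2
      ≤ ((seedCount (A ω) (B ω) π S i (π i) : ℕ) : ℝ)))).card
      ≤ ⌊96 * Real.log n / (q * s)⌋₊ := by
    by_contra hcon
    obtain ⟨R, hRsub, hRcard⟩ := Finset.exists_subset_card_eq
      (n := ⌊96 * Real.log n / (q * s)⌋₊ + 1)
      (s := Sᶜ.filter (fun i => ¬ ((m:ℝ) * q * s / 2
        ≤ ((seedCount (A ω) (B ω) π S i (π i) : ℕ) : ℝ)))) (by omega)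
    refine hE1 ⟨S, R, hS, hRcard, ?_, ?_⟩
    · exact fun i hi => Finset.mem_compl.mp (Finset.mem_filter.mp (hRsub hi)).1
    · exact fun i hi => not_le.mp (Finset.mem_filter.mp (hRsub hi)).2
  -- weight comparison
  have hw := hmax π (fun i _ => rfl)
  have hpart1 := Finset.card_filter_add_card_filter_not
    (s := Sᶜ) (p := fun i => ((m:ℝ) * q * s / 2
      ≤ ((seedCount (A ω) (B ω) π S i (π i) : ℕ) : ℝ)))
  have hpartc := Finset.card_filter_add_card_filter_not
    (s := Sᶜ) (p := fun i => ((m:ℝ) * q * s / 2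
      ≤ ((seedCount (A ω) (B ω) π S i (π1 i) : ℕ) : ℝ)))
  have hwpi : matchWeight (A ω) (B ω) π S ((m:ℝ) * q * s / 2) π
      = (Sᶜ.filter (fun i => ((m:ℝ) * q * s / 2
        ≤ ((seedCount (A ω) (B ω) π S i (π i) : ℕ) : ℝ)))).card := rfl
  have hwp1 : matchWeight (A ω) (B ω) π S ((m:ℝ) * q * s / 2) π1
      = (Sᶜ.filter (fun i => ((m:ℝ) * q * s / 2
        ≤ ((seedCount (A ω) (B ω) π S i (π1 i) : ℕ) : ℝ)))).card := rfl
  have hcold : (Sᶜ.filter (fun i => ¬ ((m:ℝ) * q * s / 2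
      ≤ ((seedCount (A ω) (B ω) π S i (π1 i) : ℕ) : ℝ)))).card
      ≤ (Sᶜ.filter (fun i => ¬ ((m:ℝ) * q * s / 2
      ≤ ((seedCount (A ω) (B ω) π S i (π i) : ℕ) : ℝ)))).card := by
    rw [hwpi, hwp1] at hw
    omega
  -- error set split
  have hpart2 := Finset.card_filter_add_card_filter_not
    (s := univ.filter (fun i => π1 i ≠ π i)) (p := fun i => ((m:ℝ) * q * s / 2
      ≤ ((seedCount (A ω) (B ω) π S i (π1 i) : ℕ) : ℝ)))
  have hErrS : ∀ i, π1 i ≠ π i → i ∉ S := by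
    intro i hi hiS; exact hi (hext i hiS)
  have hcoldsub : ((univ.filter (fun i => π1 i ≠ π i)).filter (fun i => ¬ ((m:ℝ) * q * s / 2
      ≤ ((seedCount (A ω) (B ω) π S i (π1 i) : ℕ) : ℝ))))
      ⊆ Sᶜ.filter (fun i => ¬ ((m:ℝ) * q * s / 2
      ≤ ((seedCount (A ω) (B ω) π S i (π1 i) : ℕ) : ℝ))) := by
    intro i hi
    rw [Finset.mem_filter] at hi ⊢
    refine ⟨Finset.mem_compl.mpr (hErrS i (Finset.mem_filter.mp hi.1).2), hi.2⟩
  have hcold2 : ((univ.filter (fun i => π1 i ≠ π i)).filter (fun i => ¬ ((m:ℝ) * q * s / 2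
      ≤ ((seedCount (A ω) (B ω) π S i (π1 i) : ℕ) : ℝ)))).card
      ≤ ⌊96 * Real.log n / (q * s)⌋₊ :=
    ((Finset.card_le_card hcoldsub).trans hcold).trans hBad
  -- hot errors
  have hhot : ((univ.filter (fun i => π1 i ≠ π i)).filter (fun i => ((m:ℝ) * q * s / 2
      ≤ ((seedCount (A ω) (B ω) π S i (π1 i) : ℕ) : ℝ)))).card
      ≤ ⌊96 * Real.log n / (q * s)⌋₊ := by
    by_contra hcon
    push_neg at hcon
    set EH := (univ.filter (fun i => π1 i ≠ π i)).filter (fun i => ((m:ℝ) * q * s / 2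
      ≤ ((seedCount (A ω) (B ω) π S i (π1 i) : ℕ) : ℝ))) with hEH
    have hMM0card : (EH.image (fun i => (i, π1 i))).card = EH.card :=
      Finset.card_image_of_injective _ (fun a b hab => congrArg Prod.fst hab)
    obtain ⟨M1, hM1sub, hM1card⟩ := Finset.exists_subset_card_eq
      (n := ⌊96 * Real.log n / (q * s)⌋₊ + 1) (s := EH.image (fun i => (i, π1 i)))
      (by omega)
    have hshape : ∀ t ∈ M1, ∃ i, i ∈ EH ∧ t = (i, π1 i) := by
      intro t ht
      obtain ⟨i, hi, he⟩ := Finset.mem_image.mp (hM1sub ht)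
      exact ⟨i, hi, he.symm⟩
    have hfirst : ∀ t ∈ M1, ∀ t' ∈ M1, t.1 = t'.1 → t = t' := by
      intro t ht t' ht' he
      obtain ⟨i, _, rfl⟩ := hshape t ht
      obtain ⟨i', _, rfl⟩ := hshape t' ht'
      cases he; rfl
    have hsecond : ∀ t ∈ M1, ∀ t' ∈ M1, t.2 = t'.2 → t = t' := by
      intro t ht t' ht' he
      obtain ⟨i, _, rfl⟩ := hshape t ht
      obtain ⟨i', _, rfl⟩ := hshape t' ht'
      have : i = i' := π1.injective he
      subst this; rfl
    obtain ⟨I, hIsub, hIcard, hIind⟩ := exists_indep_subset π M1 hfirst hsecond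
    have hvle : (⌊96 * Real.log n / (q * s)⌋₊ + 1 + 2) / 3 ≤ I.card := by omega
    obtain ⟨I', hI'sub, hI'card⟩ := Finset.exists_subset_card_eq
      (n := (⌊96 * Real.log n / (q * s)⌋₊ + 1 + 2) / 3) (s := I) hvle
    have hshape' : ∀ t ∈ I', ∃ i, i ∈ EH ∧ t = (i, π1 i) :=
      fun t ht => hshape t (hIsub (hI'sub ht))
    refine hE2 ⟨S, I', hS, hI'card, ?_, ?_, ?_, ?_, ?_, ?_⟩
    · intro t ht
      obtain ⟨i, hi, rfl⟩ := hshape' t ht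
      exact hErrS i (Finset.mem_filter.mp (Finset.mem_filter.mp hi).1).2
    · intro t ht hmem
      obtain ⟨i, hi, rfl⟩ := hshape' t ht
      obtain ⟨j, hj, hje⟩ := Finset.mem_image.mp hmem
      have : π1 j = π1 i := (hext j hj).trans hje
      have : j = i := π1.injective this
      subst this
      exact hErrS j (Finset.mem_filter.mp (Finset.mem_filter.mp hi).1).2 hj
    · exact fun t ht t' ht' => hfirst t (hIsub (hI'sub ht)) t' (hIsub (hI'sub ht'))
    · exact fun t ht t' ht' => hsecond t (hIsub (hI'sub ht)) t' (hIsub (hI'sub ht'))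
    · intro t ht t' ht'
      by_cases he : t = t'
      · subst he
        obtain ⟨i, hi, rfl⟩ := hshape' t ht
        exact (Finset.mem_filter.mp (Finset.mem_filter.mp hi).1).2
      · exact hIind t (hI'sub ht) t' (hI'sub ht') he
    · intro t ht
      obtain ⟨i, hi, rfl⟩ := hshape' t ht
      exact (Finset.mem_filter.mp hi).2
  -- combine
  have htot : ((univ.filter (fun i => π1 i ≠ π i)).card : ℝ)
      ≤ 2 * (⌊96 * Real.log n / (q * s)⌋₊ : ℝ) := by
    have : (univ.filter (fun i => π1 i ≠ π i)).card
        ≤ 2 * ⌊96 * Real.log n / (q * s)⌋₊ := by omega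
    exact_mod_cast this
  have hfl : (⌊96 * Real.log n / (q * s)⌋₊ : ℝ) ≤ 96 * Real.log n / (q * s) :=
    Nat.floor_le hu0
  calc ((univ.filter (fun i => π1 i ≠ π i)).card : ℝ)
      ≤ 2 * (⌊96 * Real.log n / (q * s)⌋₊ : ℝ) := htot
    _ ≤ 2 * (96 * Real.log n / (q * s)) := by linarith
    _ = 192 * Real.log n / (q * s) := by ring

end Aux

/-!
STATEMENT 16 (first stage of seeded matching): assume `n ≥ 2`, `m·qs ≥ 96·log n`, and
`s ≥ 12q`.  With probability at least `1 − 2n^{−m}`, simultaneously for every seed set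
`S ⊆ [n]` with `|S| = m` and `π0 = π*|_S`: every permutation `π1` of `[n]` extending `π0`
that maximizes the bipartite matching weight (threshold `κ = mqs/2`) among all such
permutations has at most `192·(log n)/(qs)` errors w.r.t. `π*`.
-/
theorem seeded_matching_first_stage
    (n m : ℕ) (q s : ℝ) (Ω : Type*) [MeasurableSpace Ω] (P : Measure Ω)
    [IsProbabilityMeasure P]
    (A B : Ω → Fin n → Fin n → Bool) (π : Equiv.Perm (Fin n))
    (hmodel : IsCorrER P n q s A B π)
    (hn : 2 ≤ n) (hm : 96 * Real.log n ≤ m * (q * s)) (hs : 12 * q ≤ s) :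
    ENNReal.ofReal (1 - 2 / (n : ℝ) ^ m) ≤
      P {ω | ∀ S : Finset (Fin n), S.card = m →
          ∀ π1 : Equiv.Perm (Fin n), (∀ i ∈ S, π1 i = π i) →
          (∀ π' : Equiv.Perm (Fin n), (∀ i ∈ S, π' i = π i) →
            matchWeight (A ω) (B ω) π S (m * q * s / 2) π'
              ≤ matchWeight (A ω) (B ω) π S (m * q * s / 2) π1) →
          ((univ.filter fun i => π1 i ≠ π i).card : ℝ) ≤ 192 * Real.log n / (q * s)} := by
  classical
  obtain ⟨hq, hs0, hs1, hqs1, hm1⟩ := params hmodel m hn hm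
  set E1 : Set Ω := {ω | ∃ SS RR : Finset (Fin n), SS.card = m
      ∧ RR.card = ⌊96 * Real.log n / (q * s)⌋₊ + 1
      ∧ (∀ i ∈ RR, i ∉ SS)
      ∧ ∀ i ∈ RR, ((seedCount (A ω) (B ω) π SS i (π i) : ℕ) : ℝ) < (m : ℝ) * q * s / 2}
    with hE1def
  set E2 : Set Ω := {ω | ∃ (SS : Finset (Fin n)) (MM : Finset (Fin n × Fin n)), SS.card = m
      ∧ MM.card = (⌊96 * Real.log n / (q * s)⌋₊ + 1 + 2) / 3
      ∧ (∀ t ∈ MM, t.1 ∉ SS) ∧ (∀ t ∈ MM, t.2 ∉ SS.image π)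
      ∧ (∀ t ∈ MM, ∀ t' ∈ MM, t.1 = t'.1 → t = t')
      ∧ (∀ t ∈ MM, ∀ t' ∈ MM, t.2 = t'.2 → t = t')
      ∧ (∀ t ∈ MM, ∀ t' ∈ MM, t.2 ≠ π t'.1)
      ∧ ∀ t ∈ MM, ((m:ℝ) * q * s / 2) ≤ ((seedCount (A ω) (B ω) π SS t.1 t.2 : ℕ) : ℝ)}
    with hE2def
  have h1 : P E1 ≤ ENNReal.ofReal (1 / (n : ℝ) ^ m) := E1_bound hmodel m hn hm
  have h2 : P E2 ≤ ENNReal.ofReal (1 / (n : ℝ) ^ m) := E2_bound hmodel m hn hm hs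
  set G : Set Ω := {ω | ∀ S : Finset (Fin n), S.card = m →
      ∀ π1 : Equiv.Perm (Fin n), (∀ i ∈ S, π1 i = π i) →
      (∀ π' : Equiv.Perm (Fin n), (∀ i ∈ S, π' i = π i) →
        matchWeight (A ω) (B ω) π S (m * q * s / 2) π'
          ≤ matchWeight (A ω) (B ω) π S (m * q * s / 2) π1) →
      ((univ.filter fun i => π1 i ≠ π i).card : ℝ) ≤ 192 * Real.log n / (q * s)} with hGdef
  have hsub : Gᶜ ⊆ E1 ∪ E2 := by
    intro ω hω
    by_contra hne
    obtain ⟨hne1, hne2⟩ := not_or.mp hne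
    exact hω (det_part m hq hs0 hn ω trivial hne1 hne2)
  have hpow0 : (0:ℝ) < (n : ℝ) ^ m := by
    have : (0:ℝ) < (n:ℝ) := by exact_mod_cast hn.trans_lt' zero_lt_two
    positivity
  have hPc : P Gᶜ ≤ ENNReal.ofReal (2 / (n : ℝ) ^ m) := by
    calc P Gᶜ ≤ P (E1 ∪ E2) := measure_mono hsub
      _ ≤ P E1 + P E2 := measure_union_le _ _
      _ ≤ ENNReal.ofReal (1 / (n : ℝ) ^ m) + ENNReal.ofReal (1 / (n : ℝ) ^ m) :=
          add_le_add h1 h2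
      _ = ENNReal.ofReal (2 / (n : ℝ) ^ m) := by
          rw [← ENNReal.ofReal_add (by positivity) (by positivity)]
          congr 1; ring
  have huniv : (1 : ℝ≥0∞) ≤ P G + P Gᶜ := by
    have hcc := measure_union_le (μ := P) G Gᶜ
    rw [Set.union_compl_self] at hcc
    simpa using hcc
  have hfinal : ENNReal.ofReal (1 - 2 / (n : ℝ) ^ m)
      = 1 - ENNReal.ofReal (2 / (n : ℝ) ^ m) := by
    rw [ENNReal.ofReal_sub _ (by positivity), ENNReal.ofReal_one]
  rw [hfinal]
  refine tsub_le_iff_right.mpr ?_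
  calc (1:ℝ≥0∞) ≤ P G + P Gᶜ := huniv
    _ ≤ P G + ENNReal.ofReal (2 / (n : ℝ) ^ m) := add_le_add_right hPc _

end GraphMatching
end
end

section
/- Let D(x‖q) = x·log(x/q) + (1−x)·log((1−x)/(1−q)) denote the Kullback–Leibler divergence between Bern(x) and Bern(q). Then: (i) for all 0 < q ≤ x ≤ 1, D(x‖q) ≥ (x−q)²/(2x(1−q)); and (ii) for all 0 < q ≤ x ≤ 1/2, D(x‖q) ≤ (x−q)²/(2q(1−q)). -/
noncomputable def bernKL (x q : ℝ) : ℝ :=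
  x * Real.log (x / q) + (1 - x) * Real.log ((1 - x) / (1 - q))

section helpers

variable (x c : ℝ)

private noncomputable def gFun (x c : ℝ) : ℝ → ℝ := fun t =>
  (x * Real.log x + (1 - x) * Real.log (1 - x))
    - (x * Real.log t + (1 - x) * Real.log (1 - t)) - (x - t) ^ 2 / (2 * c)

private lemma gFun_hasDerivAt {t : ℝ} (ht : 0 < t) (ht1 : t < 1) :
    HasDerivAt (gFun x c)
      (0 - (x * t⁻¹ + (1 - x) * (-1 / (1 - t))) - (2 * (x - t) ^ 1 * (-1)) / (2 * c)) t := by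
  have h1 : HasDerivAt Real.log t⁻¹ t := Real.hasDerivAt_log ht.ne'
  have h2 : HasDerivAt (fun s : ℝ => 1 - s) (-1) t := (hasDerivAt_id t).const_sub 1
  have h3 : HasDerivAt (fun s : ℝ => Real.log (1 - s)) (-1 / (1 - t)) t :=
    h2.log (by linarith)
  have h5 : HasDerivAt (fun s : ℝ => x - s) (-1) t := (hasDerivAt_id t).const_sub x
  have h4 : HasDerivAt (fun s : ℝ => (x - s) ^ 2) (2 * (x - t) ^ 1 * (-1)) t := by
    have := h5.fun_pow 2
    simpa using this
  exact ((hasDerivAt_const t _).sub ((h1.const_mul x).add (h3.const_mul (1 - x)))).sub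
    (h4.div_const (2 * c))

private lemma gderiv_eq {t : ℝ} (ht : 0 < t) (ht1 : t < 1) (hc : c ≠ 0) :
    0 - (x * t⁻¹ + (1 - x) * (-1 / (1 - t))) - (2 * (x - t) ^ 1 * (-1)) / (2 * c)
      = (x - t) / c - (x - t) / (t * (1 - t)) := by
  have h1 : t ≠ 0 := ht.ne'
  have h2 : (1 : ℝ) - t ≠ 0 := by linarith
  field_simp
  ring

end helpers

private lemma gFun_x_eq (x c : ℝ) : gFun x c x = 0 := by
  simp [gFun]

private lemma bernKL_eq {q x : ℝ} (hq : 0 < q) (hq1 : q < 1) (hx : 0 < x) (hx1 : x < 1) :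
    bernKL x q = (x * Real.log x + (1 - x) * Real.log (1 - x))
      - (x * Real.log q + (1 - x) * Real.log (1 - q)) := by
  rw [bernKL, Real.log_div hx.ne' hq.ne', Real.log_div (by linarith) (by linarith)]
  ring

private lemma lower_main {q x : ℝ} (hq : 0 < q) (hqx : q < x) (hx1 : x < 1) {c : ℝ}
    (hc : 0 < c) (hcb : ∀ t ∈ Set.Icc q x, t * (1 - t) ≤ c) :
    (x - q) ^ 2 / (2 * c) ≤ bernKL x q := by
  have key : AntitoneOn (gFun x c) (Set.Icc q x) := by
    apply antitoneOn_of_deriv_nonpos (convex_Icc q x)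
    · intro t ht
      have ht0 : 0 < t := lt_of_lt_of_le hq ht.1
      have ht1 : t < 1 := lt_of_le_of_lt ht.2 hx1
      exact (gFun_hasDerivAt x c ht0 ht1).continuousAt.continuousWithinAt
    · rw [interior_Icc]
      intro t ht
      have ht0 : 0 < t := lt_trans hq ht.1
      have ht1 : t < 1 := lt_trans ht.2 hx1
      exact (gFun_hasDerivAt x c ht0 ht1).differentiableAt.differentiableWithinAt
    · rw [interior_Icc]
      intro t ht
      have ht0 : 0 < t := lt_trans hq ht.1
      have ht1 : t < 1 := lt_trans ht.2 hx1
      rw [(gFun_hasDerivAt x c ht0 ht1).deriv, gderiv_eq x c ht0 ht1 hc.ne']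
      have hpos : 0 < t * (1 - t) := by nlinarith
      have hle : t * (1 - t) ≤ c := hcb t ⟨le_of_lt ht.1, le_of_lt ht.2⟩
      have h1 : (x - t) / c ≤ (x - t) / (t * (1 - t)) := by
        apply div_le_div_of_nonneg_left (by linarith [ht.2]) hpos hle
      linarith
  have h := key (Set.left_mem_Icc.2 hqx.le) (Set.right_mem_Icc.2 hqx.le) hqx.le
  rw [gFun_x_eq] at h
  have hbk := bernKL_eq hq (lt_of_lt_of_le hqx hx1.le) (lt_trans hq hqx) hx1
  simp only [gFun] at h
  linarith

private lemma upper_main {q x : ℝ} (hq : 0 < q) (hqx : q < x) (hx1 : x < 1) {c : ℝ}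
    (hc : 0 < c) (hcb : ∀ t ∈ Set.Icc q x, c ≤ t * (1 - t)) :
    bernKL x q ≤ (x - q) ^ 2 / (2 * c) := by
  have key : MonotoneOn (gFun x c) (Set.Icc q x) := by
    apply monotoneOn_of_deriv_nonneg (convex_Icc q x)
    · intro t ht
      have ht0 : 0 < t := lt_of_lt_of_le hq ht.1
      have ht1 : t < 1 := lt_of_le_of_lt ht.2 hx1
      exact (gFun_hasDerivAt x c ht0 ht1).continuousAt.continuousWithinAt
    · rw [interior_Icc]
      intro t ht
      have ht0 : 0 < t := lt_trans hq ht.1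
      have ht1 : t < 1 := lt_trans ht.2 hx1
      exact (gFun_hasDerivAt x c ht0 ht1).differentiableAt.differentiableWithinAt
    · rw [interior_Icc]
      intro t ht
      have ht0 : 0 < t := lt_trans hq ht.1
      have ht1 : t < 1 := lt_trans ht.2 hx1
      rw [(gFun_hasDerivAt x c ht0 ht1).deriv, gderiv_eq x c ht0 ht1 hc.ne']
      have hpos : 0 < t * (1 - t) := by nlinarith
      have hle : c ≤ t * (1 - t) := hcb t ⟨le_of_lt ht.1, le_of_lt ht.2⟩
      have h1 : (x - t) / (t * (1 - t)) ≤ (x - t) / c := by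
        apply div_le_div_of_nonneg_left (by linarith [ht.2]) hc hle
      linarith
  have h := key (Set.left_mem_Icc.2 hqx.le) (Set.right_mem_Icc.2 hqx.le) hqx.le
  rw [gFun_x_eq] at h
  have hbk := bernKL_eq hq (lt_of_lt_of_le hqx hx1.le) (lt_trans hq hqx) hx1
  simp only [gFun] at h
  linarith

theorem kl_divergence_quadratic_bounds :
    (∀ q x : ℝ, 0 < q → q ≤ x → x ≤ 1 →
      (x - q) ^ 2 / (2 * x * (1 - q)) ≤ bernKL x q) ∧
    (∀ q x : ℝ, 0 < q → q ≤ x → x ≤ 1 / 2 →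
      bernKL x q ≤ (x - q) ^ 2 / (2 * q * (1 - q))) := by
  constructor
  · intro q x hq hqx hx1
    rcases eq_or_lt_of_le hqx with rfl | hqx'
    · have h0 : bernKL q q = 0 := by
        rcases eq_or_ne q 1 with rfl | h
        · norm_num [bernKL]
        · simp [bernKL, div_self hq.ne', div_self (sub_ne_zero.2 (Ne.symm h))]
      simp [h0, sub_self]
    rcases eq_or_lt_of_le hx1 with rfl | hx1'
    · -- x = 1 case: bernKL 1 q = -log q ≥ (1-q)/2
      have hlog : Real.log q ≤ q - 1 := Real.log_le_sub_one_of_pos hq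
      have : bernKL 1 q = - Real.log q := by
        rw [bernKL, Real.log_div one_ne_zero hq.ne']
        simp
      rw [this]
      rw [div_le_iff₀ (by nlinarith)]
      nlinarith
    · have hc : (0:ℝ) < x * (1 - q) := by nlinarith
      have := lower_main hq hqx' hx1' hc (fun t ht => by nlinarith [ht.1, ht.2])
      calc (x - q) ^ 2 / (2 * x * (1 - q)) = (x - q) ^ 2 / (2 * (x * (1 - q))) := by ring_nf
        _ ≤ bernKL x q := this
  · intro q x hq hqx hx2
    rcases eq_or_lt_of_le hqx with rfl | hqx'
    · have h0 : bernKL q q = 0 := by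
        rcases eq_or_ne q 1 with rfl | h
        · norm_num [bernKL]
        · simp [bernKL, div_self hq.ne', div_self (sub_ne_zero.2 (Ne.symm h))]
      simp [h0, sub_self]
    · have hx1' : x < 1 := by linarith
      have hc : (0:ℝ) < q * (1 - q) := by nlinarith
      have := upper_main hq hqx' hx1' hc (fun t ht => by nlinarith [ht.1, ht.2])
      calc bernKL x q ≤ (x - q) ^ 2 / (2 * (q * (1 - q))) := this
        _ = (x - q) ^ 2 / (2 * q * (1 - q)) := by ring_nf
end
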